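/- arXiv:2007.10244 — 3 statements merged into one kernel-verified Lean document; each statement's English description precedes it below -/
import Mathlib

section
/- Let 0 < α < 1, let (a,b) be a finite interval, and let F ∈ L^1((a,b)). Suppose I₋^{1-α}F is absolutely continuous on [a,b], in the sense that there exist a constant d ∈ ℝ and g ∈ L^1((a,b)) such that (I₋^{1-α}F)(x) = d + ∫_a^x g(t) dt for every x ∈ [a,b]. Then for almost every x ∈ (a,b), F(x) = (d/Γ(α)) (x-a)^{α-1} + (I₋^α g)(x), where g = D₋^α F almost everywhere. -/
open MeasureTheory Real Set Filter Metric
open scoped Topology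

/-- The left Riemann–Liouville fractional integral of order `σ` on `(a,b)`:
`(I₋^σ f)(x) = (1/Γ(σ)) ∫_a^x (x-y)^{σ-1} f(y) dy`. -/
noncomputable def leftRLInt (σ a : ℝ) (f : ℝ → ℝ) (x : ℝ) : ℝ :=
  (1 / Real.Gamma σ) * ∫ y in a..x, (x - y) ^ (σ - 1) * f y

/- ### Auxiliary lemmas -/

lemma rl_intervalIntegrable_sub_rpow {e : ℝ} (he : -1 < e) (y u v : ℝ) :
    IntervalIntegrable (fun t => (t - y) ^ e) volume u v := by
  have h := (intervalIntegral.intervalIntegrable_rpow'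
      (a := u - y) (b := v - y) he).comp_sub_right y
  simpa using h

lemma rl_intervalIntegrable_rsub_rpow {e : ℝ} (he : -1 < e) (x u v : ℝ) :
    IntervalIntegrable (fun t => (x - t) ^ e) volume u v := by
  have h := (intervalIntegral.intervalIntegrable_rpow'
      (a := x - u) (b := x - v) he).comp_sub_left x
  simpa using h

lemma rl_integrableOn_sub_rpow {e y x : ℝ} (he : -1 < e) (hyx : y ≤ x) :
    IntegrableOn (fun t => (t - y) ^ e) (Ioo y x) :=
  ((intervalIntegrable_iff_integrableOn_Ioc_of_le hyx).1
    (rl_intervalIntegrable_sub_rpow he y y x)).mono_set Ioo_subset_Ioc_self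

lemma rl_integrableOn_rsub_rpow {e y x : ℝ} (he : -1 < e) (hyx : y ≤ x) :
    IntegrableOn (fun t => (x - t) ^ e) (Ioo y x) :=
  ((intervalIntegrable_iff_integrableOn_Ioc_of_le hyx).1
    (rl_intervalIntegrable_rsub_rpow he x y x)).mono_set Ioo_subset_Ioc_self

lemma rl_integral_sub_rpow {e y x : ℝ} (he : -1 < e) (hyx : y ≤ x) :
    ∫ t in Ioo y x, (t - y) ^ e = (x - y) ^ (e + 1) / (e + 1) := by
  rw [← integral_Ioc_eq_integral_Ioo, ← intervalIntegral.integral_of_le hyx]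
  have h := intervalIntegral.integral_comp_sub_right (a := y) (b := x) (fun u => u ^ e) y
  rw [h, sub_self, integral_rpow (Or.inl he), Real.zero_rpow (by linarith)]
  ring

lemma rl_integral_rsub_rpow {e y x : ℝ} (he : -1 < e) (hyx : y ≤ x) :
    ∫ t in Ioo y x, (x - t) ^ e = (x - y) ^ (e + 1) / (e + 1) := by
  rw [← integral_Ioc_eq_integral_Ioo, ← intervalIntegral.integral_of_le hyx]
  have h := intervalIntegral.integral_comp_sub_left (a := y) (b := x) (fun u => u ^ e) x
  rw [h, sub_self, integral_rpow (Or.inl he), Real.zero_rpow (by linarith)]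
  ring

lemma rl_real_beta {α : ℝ} (hα : 0 < α) (hα1 : α < 1) :
    ∫ s in (0:ℝ)..1, s ^ (-α) * (1 - s) ^ (α - 1) = Real.Gamma (1 - α) * Real.Gamma α := by
  have h1 : (0:ℝ) < 1 - α := by linarith
  have hc := Complex.Gamma_mul_Gamma_eq_betaIntegral
    (s := ((1 - α : ℝ) : ℂ)) (t := ((α : ℝ) : ℂ)) (by simpa using h1) (by simpa using hα)
  have hsum : ((1 - α : ℝ) : ℂ) + ((α : ℝ) : ℂ) = 1 := by push_cast; ring
  rw [hsum, Complex.Gamma_one, one_mul] at hc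
  have hβ : Complex.betaIntegral ((1 - α : ℝ) : ℂ) ((α : ℝ) : ℂ)
      = ((∫ s in (0:ℝ)..1, s ^ (-α) * (1 - s) ^ (α - 1) : ℝ) : ℂ) := by
    rw [Complex.betaIntegral, ← intervalIntegral.integral_ofReal]
    apply intervalIntegral.integral_congr
    intro s hs
    rw [Set.uIcc_of_le (by norm_num : (0:ℝ) ≤ 1), Set.mem_Icc] at hs
    have h0s : (0:ℝ) ≤ s := hs.1
    have h1s : (0:ℝ) ≤ 1 - s := by linarith [hs.2]
    simp only [Complex.ofReal_mul]
    rw [Complex.ofReal_cpow h0s, Complex.ofReal_cpow h1s]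
    push_cast
    ring_nf
  rw [hβ] at hc
  rw [Complex.Gamma_ofReal, Complex.Gamma_ofReal] at hc
  exact_mod_cast hc.symm

lemma rl_beta_kernel_eval {α : ℝ} (hα : 0 < α) (hα1 : α < 1) {y x : ℝ} (hyx : y < x) :
    ∫ t in Ioo y x, (x - t) ^ (α - 1) * (t - y) ^ (-α)
      = Real.Gamma α * Real.Gamma (1 - α) := by
  rw [← integral_Ioc_eq_integral_Ioo, ← intervalIntegral.integral_of_le hyx.le]
  have hxy : (0:ℝ) < x - y := by linarith
  have hsub := intervalIntegral.integral_comp_mul_add (a := (0:ℝ)) (b := 1)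
    (fun t => (x - t) ^ (α - 1) * (t - y) ^ (-α)) (ne_of_gt hxy) y
  rw [mul_zero, zero_add, mul_one, show x - y + y = x by ring] at hsub
  have h2 : ∫ t in y..x, (x - t) ^ (α - 1) * (t - y) ^ (-α)
      = (x - y) * ∫ s in (0:ℝ)..1,
          (x - ((x - y) * s + y)) ^ (α - 1) * ((x - y) * s + y - y) ^ (-α) := by
    rw [hsub, smul_eq_mul, ← mul_assoc, mul_inv_cancel₀ (ne_of_gt hxy), one_mul]
  have h3 : ∫ s in (0:ℝ)..1,
      (x - ((x - y) * s + y)) ^ (α - 1) * ((x - y) * s + y - y) ^ (-α)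
      = (x - y)⁻¹ * ∫ s in (0:ℝ)..1, s ^ (-α) * (1 - s) ^ (α - 1) := by
    rw [← intervalIntegral.integral_const_mul]
    apply intervalIntegral.integral_congr
    intro s hs
    rw [Set.uIcc_of_le (by norm_num : (0:ℝ) ≤ 1), Set.mem_Icc] at hs
    have h0s : (0:ℝ) ≤ s := hs.1
    have h1s : (0:ℝ) ≤ 1 - s := by linarith [hs.2]
    show (x - ((x - y) * s + y)) ^ (α - 1) * ((x - y) * s + y - y) ^ (-α)
      = (x - y)⁻¹ * (s ^ (-α) * (1 - s) ^ (α - 1))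
    rw [show x - ((x - y) * s + y) = (x - y) * (1 - s) by ring,
        show (x - y) * s + y - y = (x - y) * s by ring,
        Real.mul_rpow hxy.le h1s, Real.mul_rpow hxy.le h0s,
        show (x - y) ^ (α - 1) * (1 - s) ^ (α - 1) * ((x - y) ^ (-α) * s ^ (-α))
          = ((x - y) ^ (α - 1) * (x - y) ^ (-α)) * ((1 - s) ^ (α - 1) * s ^ (-α)) by ring,
        ← Real.rpow_add hxy, show α - 1 + -α = -1 by ring, Real.rpow_neg_one]
    ring
  rw [h2, h3, ← mul_assoc, mul_inv_cancel₀ (ne_of_gt hxy), one_mul,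
    rl_real_beta hα hα1, mul_comm]

lemma rl_beta_kernel_integrableOn {α : ℝ} (hα : 0 < α) (hα1 : α < 1) {y x : ℝ} (hyx : y < x) :
    IntegrableOn (fun t => (x - t) ^ (α - 1) * (t - y) ^ (-α)) (Ioo y x) := by
  set m := (y + x) / 2 with hm
  have hym : y < m := by simp only [hm]; linarith
  have hmx : m < x := by simp only [hm]; linarith
  have hL : IntegrableOn (fun t => (x - t) ^ (α - 1) * (t - y) ^ (-α)) (Icc y m) := by
    have hi : IntegrableOn (fun t => (t - y) ^ (-α)) (Icc y m) := by
      rw [integrableOn_Icc_iff_integrableOn_Ioc]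
      exact (intervalIntegrable_iff_integrableOn_Ioc_of_le hym.le).1
        (rl_intervalIntegrable_sub_rpow (by linarith) y y m)
    have hc : ContinuousOn (fun t => (x - t) ^ (α - 1)) (Icc y m) := by
      apply ContinuousOn.rpow_const
      · exact (continuous_const.sub continuous_id).continuousOn
      · intro t ht
        left
        intro h0
        have : x = t := by linarith [sub_eq_zero.1 h0]
        linarith [ht.2]
    have h := hi.mul_continuousOn hc isCompact_Icc
    apply h.congr_fun ?_ measurableSet_Icc
    intro t _; ring
  have hR : IntegrableOn (fun t => (x - t) ^ (α - 1) * (t - y) ^ (-α)) (Icc m x) := by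
    have hi : IntegrableOn (fun t => (x - t) ^ (α - 1)) (Icc m x) := by
      rw [integrableOn_Icc_iff_integrableOn_Ioc]
      exact (intervalIntegrable_iff_integrableOn_Ioc_of_le hmx.le).1
        (rl_intervalIntegrable_rsub_rpow (by linarith) x m x)
    have hc : ContinuousOn (fun t => (t - y) ^ (-α)) (Icc m x) := by
      apply ContinuousOn.rpow_const
      · exact (continuous_id.sub continuous_const).continuousOn
      · intro t ht
        left
        intro h0
        have : t = y := by linarith [sub_eq_zero.1 h0]
        linarith [ht.1]
    exact hi.mul_continuousOn hc isCompact_Icc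
  exact (hL.union hR).mono_set (by
    intro t ht
    rcases le_or_gt t m with h | h
    · exact Or.inl ⟨ht.1.le, h⟩
    · exact Or.inr ⟨h.le, ht.2.le⟩)

lemma rl_inner_eq_left {a x t : ℝ} (ht : t ∈ Ioo a x) (K : ℝ → ℝ → ℝ) :
    ∫ y in Ioo a x, (if y < t then K t y else 0) = ∫ y in Ioo a t, K t y := by
  have h : (fun y => if y < t then K t y else 0) = (Iio t).indicator (fun y => K t y) := by
    funext y; simp [Set.indicator, Set.mem_Iio]
  rw [h, setIntegral_indicator measurableSet_Iio]
  have hset : Ioo a x ∩ Iio t = Ioo a t := by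
    ext s
    simp only [Set.mem_inter_iff, Set.mem_Ioo, Set.mem_Iio]
    exact ⟨fun ⟨⟨hh1, _⟩, hh3⟩ => ⟨hh1, hh3⟩, fun ⟨hh1, hh2⟩ => ⟨⟨hh1, hh2.trans ht.2⟩, hh2⟩⟩
  rw [hset]

lemma rl_inner_eq_right {a x y : ℝ} (hy : y ∈ Ioo a x) (K : ℝ → ℝ → ℝ) :
    ∫ t in Ioo a x, (if y < t then K t y else 0) = ∫ t in Ioo y x, K t y := by
  have h : (fun t => if y < t then K t y else 0) = (Ioi y).indicator (fun t => K t y) := by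
    funext t; simp [Set.indicator, Set.mem_Ioi]
  rw [h, setIntegral_indicator measurableSet_Ioi]
  have hset : Ioo a x ∩ Ioi y = Ioo y x := by
    ext s
    simp only [Set.mem_inter_iff, Set.mem_Ioo, Set.mem_Ioi]
    exact ⟨fun ⟨⟨_, hh2⟩, hh3⟩ => ⟨hh3, hh2⟩, fun ⟨hh1, hh2⟩ => ⟨⟨hy.1.trans hh1, hh2⟩, hh1⟩⟩
  rw [hset]

lemma rl_swap_triangle {a x : ℝ} (K : ℝ → ℝ → ℝ)
    (hK : AEStronglyMeasurable (Function.uncurry K)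
      ((volume.restrict (Ioo a x)).prod (volume.restrict (Ioo a x))))
    (h1 : ∀ y ∈ Ioo a x, IntegrableOn (fun t => K t y) (Ioo y x))
    (h2 : IntegrableOn (fun y => ∫ t in Ioo y x, ‖K t y‖) (Ioo a x)) :
    (∫ t in Ioo a x, ∫ y in Ioo a t, K t y) = (∫ y in Ioo a x, ∫ t in Ioo y x, K t y)
    ∧ IntegrableOn (fun t => ∫ y in Ioo a t, K t y) (Ioo a x) := by
  set f : ℝ → ℝ → ℝ := fun t y => if y < t then K t y else 0 with hf
  have hsm : MeasurableSet {p : ℝ × ℝ | p.2 < p.1} :=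
    measurableSet_lt measurable_snd measurable_fst
  have huncurry : Function.uncurry f = {p : ℝ × ℝ | p.2 < p.1}.indicator (Function.uncurry K) := by
    funext p
    by_cases h : p.2 < p.1 <;> simp [hf, Function.uncurry, Set.indicator, h]
  have hfm : AEStronglyMeasurable (Function.uncurry f)
      ((volume.restrict (Ioo a x)).prod (volume.restrict (Ioo a x))) := by
    rw [huncurry]
    exact hK.indicator hsm
  have hint : Integrable (Function.uncurry f)
      ((volume.restrict (Ioo a x)).prod (volume.restrict (Ioo a x))) := by
    rw [integrable_prod_iff' hfm]
    constructor
    · filter_upwards [ae_restrict_mem measurableSet_Ioo] with y hy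
      have h : (fun t => Function.uncurry f (t, y)) = (Ioi y).indicator (fun t => K t y) := by
        funext t; simp [hf, Function.uncurry, Set.indicator, Set.mem_Ioi]
      rw [h, integrable_indicator_iff measurableSet_Ioi]
      rw [IntegrableOn, Measure.restrict_restrict measurableSet_Ioi]
      have hset : Ioi y ∩ Ioo a x = Ioo y x := by
        ext s
        simp only [Set.mem_inter_iff, Set.mem_Ioo, Set.mem_Ioi]
        exact ⟨fun ⟨hh1, _, hh3⟩ => ⟨hh1, hh3⟩, fun ⟨hh1, hh2⟩ => ⟨hh1, hy.1.trans hh1, hh2⟩⟩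
      rw [hset]
      exact h1 y hy
    · apply (h2.congr ?_)
      filter_upwards [ae_restrict_mem measurableSet_Ioo] with y hy
      have h : (fun t => ‖Function.uncurry f (t, y)‖) = (Ioi y).indicator (fun t => ‖K t y‖) := by
        funext t
        by_cases ht : y < t <;> simp [hf, Function.uncurry, Set.indicator, Set.mem_Ioi, ht]
      rw [h, setIntegral_indicator measurableSet_Ioi]
      have hset : Ioo a x ∩ Ioi y = Ioo y x := by
        ext s
        simp only [Set.mem_inter_iff, Set.mem_Ioo, Set.mem_Ioi]
        exact ⟨fun ⟨⟨_, hh3⟩, hh1⟩ => ⟨hh1, hh3⟩, fun ⟨hh1, hh2⟩ => ⟨⟨hy.1.trans hh1, hh2⟩, hh1⟩⟩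
      rw [hset]
  constructor
  · have hswap := integral_integral_swap hint
    calc ∫ t in Ioo a x, ∫ y in Ioo a t, K t y
        = ∫ t in Ioo a x, ∫ y in Ioo a x, f t y := by
          apply setIntegral_congr_fun measurableSet_Ioo
          intro t ht
          exact (rl_inner_eq_left ht K).symm
      _ = ∫ y in Ioo a x, ∫ t in Ioo a x, f t y := hswap
      _ = ∫ y in Ioo a x, ∫ t in Ioo y x, K t y := by
          apply setIntegral_congr_fun measurableSet_Ioo
          intro y hy
          exact rl_inner_eq_right hy K
  · have hmarg := hint.integral_prod_left
    apply (hmarg.congr ?_)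
    filter_upwards [ae_restrict_mem measurableSet_Ioo] with t ht
    exact rl_inner_eq_left ht K

lemma rl_ae_hasDerivAt_primitive (φ : ℝ → ℝ) (hφ : Integrable φ) (a : ℝ) :
    ∀ᵐ x : ℝ, HasDerivAt (fun t => ∫ s in a..t, φ s) (φ x) x := by
  filter_upwards [IsUnifLocDoublingMeasure.ae_tendsto_average_norm_sub (volume : Measure ℝ)
    hφ.locallyIntegrable 1] with x hx
  have δlim : Tendsto (fun y : ℝ => |y - x|) (𝓝[≠] x) (𝓝[>] 0) := by
    apply tendsto_nhdsWithin_of_tendsto_nhds_of_eventually_within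
    · have h : Tendsto (fun y : ℝ => |y - x|) (𝓝 x) (𝓝 0) := by
        have h2 : Continuous (fun y : ℝ => |y - x|) :=
          (continuous_id.sub continuous_const).abs
        simpa using h2.tendsto x
      exact h.mono_left nhdsWithin_le_nhds
    · filter_upwards [self_mem_nhdsWithin] with y hy
      exact abs_pos.2 (sub_ne_zero.2 hy)
  have hmem : ∀ᶠ y : ℝ in 𝓝[≠] x, x ∈ closedBall ((fun _ : ℝ => x) y) (1 * |y - x|) := by
    filter_upwards with y
    simp [abs_nonneg]
  have hx2 := hx (fun _ => x) (fun y => |y - x|) δlim hmem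
  rw [hasDerivAt_iff_tendsto_slope]
  have key : Tendsto (fun y => slope (fun t => ∫ s in a..t, φ s) x y - φ x)
      (𝓝[≠] x) (𝓝 0) := by
    apply squeeze_zero_norm' (a := fun y => 2 * ⨍ t in closedBall x |y - x|, ‖φ t - φ x‖)
    · filter_upwards [self_mem_nhdsWithin] with y hy
      have hyx : y ≠ x := hy
      have hxy : (0:ℝ) < |y - x| := abs_pos.2 (sub_ne_zero.2 hyx)
      have hii : ∀ u v : ℝ, IntervalIntegrable φ volume u v := fun u v => hφ.intervalIntegrable
      have hdiff : (∫ s in a..y, φ s) - (∫ s in a..x, φ s) = ∫ s in x..y, φ s :=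
        intervalIntegral.integral_interval_sub_left (hii a y) (hii a x)
      have h1 : slope (fun t => ∫ s in a..t, φ s) x y - φ x
          = (y - x)⁻¹ * ∫ s in x..y, (φ s - φ x) := by
        rw [slope_def_field, div_eq_inv_mul, hdiff]
        have h4 : ∫ s in x..y, (φ s - φ x) = (∫ s in x..y, φ s) - (y - x) * φ x := by
          rw [intervalIntegral.integral_sub (hii x y) intervalIntegrable_const]
          simp [mul_comm]
        rw [h4, mul_sub, inv_mul_cancel_left₀ (sub_ne_zero.2 hyx)]
      rw [h1]
      rw [norm_mul]
      have hbound : ‖∫ s in x..y, (φ s - φ x)‖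
          ≤ ∫ t in closedBall x |y - x|, ‖φ t - φ x‖ := by
        refine (intervalIntegral.norm_integral_le_abs_integral_norm).trans ?_
        have hsub : Set.uIoc x y ⊆ closedBall x |y - x| := by
          intro t ht
          rw [Set.mem_uIoc] at ht
          rw [mem_closedBall, Real.dist_eq]
          rcases ht with ⟨h1, h2⟩ | ⟨h1, h2⟩
          · rw [abs_of_pos (show (0:ℝ) < t - x by linarith),
              abs_of_pos (show (0:ℝ) < y - x by linarith)]
            linarith
          · rw [abs_of_nonpos (show t - x ≤ 0 by linarith),
              abs_of_neg (show y - x < 0 by linarith)]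
            linarith
        have hint : IntegrableOn (fun t => ‖φ t - φ x‖) (closedBall x |y - x|) volume :=
          ((hφ.integrableOn.sub (integrableOn_const (measure_closedBall_lt_top).ne enorm_ne_top)).norm)
        have hIoc : ∫ s in x..y, ‖φ s - φ x‖
            = (if x ≤ y then 1 else -1) * ∫ s in Set.uIoc x y, ‖φ s - φ x‖ := by
          rcases le_or_gt x y with h | h
          · rw [intervalIntegral.integral_of_le h, if_pos h, one_mul, Set.uIoc_of_le h]
          · rw [intervalIntegral.integral_of_ge h.le, if_neg (not_le.2 h), Set.uIoc_of_ge h.le]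
            ring
        rw [hIoc]
        rw [abs_mul]
        have habs1 : |if x ≤ y then (1:ℝ) else -1| = 1 := by split <;> simp
        rw [habs1, one_mul]
        rw [abs_of_nonneg (setIntegral_nonneg measurableSet_uIoc (fun t _ => norm_nonneg _))]
        exact setIntegral_mono_set hint (Filter.Eventually.of_forall (fun t => norm_nonneg _))
          (HasSubset.Subset.eventuallyLE hsub)
      calc ‖(y - x)⁻¹‖ * ‖∫ s in x..y, (φ s - φ x)‖
          ≤ ‖(y - x)⁻¹‖ * ∫ t in closedBall x |y - x|, ‖φ t - φ x‖ := by
            apply mul_le_mul_of_nonneg_left hbound (norm_nonneg _)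
        _ = 2 * ⨍ t in closedBall x |y - x|, ‖φ t - φ x‖ := by
            rw [setAverage_eq, Real.volume_real_closedBall (abs_nonneg _)]
            rw [Real.norm_eq_abs, abs_inv, smul_eq_mul, mul_inv]
            ring
    · simpa using hx2.const_mul 2
  have h3 := key.add_const (φ x)
  simpa using h3

theorem stmt4 (α a b d : ℝ) (hα : 0 < α) (hα1 : α < 1) (hab : a < b)
    (F g : ℝ → ℝ) (hF : IntegrableOn F (Set.Ioo a b)) (hg : IntegrableOn g (Set.Ioo a b))
    (hAC : ∀ x ∈ Set.Icc a b, leftRLInt (1 - α) a F x = d + ∫ t in a..x, g t) :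
    (∀ᵐ x ∂(volume.restrict (Set.Ioo a b)),
      F x = (d / Real.Gamma α) * (x - a) ^ (α - 1) + leftRLInt α a g x) ∧
    (∀ᵐ x ∂(volume.restrict (Set.Ioo a b)),
      HasDerivAt (fun t => leftRLInt (1 - α) a F t) (g x) x) := by
  classical
  have hΓα : 0 < Real.Gamma α := Real.Gamma_pos_of_pos hα
  have hΓ1α : 0 < Real.Gamma (1 - α) := Real.Gamma_pos_of_pos (by linarith)
  have hαm1 : (-1:ℝ) < α - 1 := by linarith
  -- measurable representatives, extended by zero
  obtain ⟨F', hF'sm, hF'ae⟩ : ∃ F' : ℝ → ℝ, StronglyMeasurable F'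
      ∧ F =ᵐ[volume.restrict (Set.Ioo a b)] F' :=
    ⟨hF.1.mk F, hF.1.stronglyMeasurable_mk, hF.1.ae_eq_mk⟩
  obtain ⟨g', hg'sm, hg'ae⟩ : ∃ g' : ℝ → ℝ, StronglyMeasurable g'
      ∧ g =ᵐ[volume.restrict (Set.Ioo a b)] g' :=
    ⟨hg.1.mk g, hg.1.stronglyMeasurable_mk, hg.1.ae_eq_mk⟩
  set Fm : ℝ → ℝ := (Set.Ioo a b).indicator F' with hFmdef
  set gm : ℝ → ℝ := (Set.Ioo a b).indicator g' with hgmdef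
  have hFm_m : Measurable Fm := (hF'sm.indicator measurableSet_Ioo).measurable
  have hgm_m : Measurable gm := (hg'sm.indicator measurableSet_Ioo).measurable
  have hFae : F =ᵐ[volume.restrict (Set.Ioo a b)] Fm := by
    refine hF'ae.trans ?_
    filter_upwards [ae_restrict_mem measurableSet_Ioo] with t ht
    simp [hFmdef, Set.indicator_of_mem ht]
  have hgae : g =ᵐ[volume.restrict (Set.Ioo a b)] gm := by
    refine hg'ae.trans ?_
    filter_upwards [ae_restrict_mem measurableSet_Ioo] with t ht
    simp [hgmdef, Set.indicator_of_mem ht]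
  have hFm_int : Integrable Fm volume :=
    (integrable_indicator_iff measurableSet_Ioo).2 (hF.congr hF'ae)
  have hgm_int : Integrable gm volume :=
    (integrable_indicator_iff measurableSet_Ioo).2 (hg.congr hg'ae)
  have hres : volume.restrict (Set.Ioc a b) = volume.restrict (Set.Ioo a b) :=
    (Measure.restrict_congr_set Ioo_ae_eq_Ioc).symm
  have hgae2 : g =ᵐ[volume.restrict (Set.Ioc a b)] gm := by rw [hres]; exact hgae
  have hFae2 : F =ᵐ[volume.restrict (Set.Ioc a b)] Fm := by rw [hres]; exact hFae
  have hgint : ∀ {u : ℝ}, u ∈ Set.Icc a b → (∫ s in a..u, g s) = ∫ s in a..u, gm s := by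
    intro u hu
    rw [intervalIntegral.integral_of_le hu.1, intervalIntegral.integral_of_le hu.1]
    exact integral_congr_ae
      (ae_restrict_of_ae_restrict_of_subset (Set.Ioc_subset_Ioc_right hu.2) hgae2)
  have hgRL : ∀ {u : ℝ}, u ∈ Set.Icc a b → leftRLInt α a g u = leftRLInt α a gm u := by
    intro u hu
    unfold leftRLInt
    congr 1
    rw [intervalIntegral.integral_of_le hu.1, intervalIntegral.integral_of_le hu.1]
    refine integral_congr_ae ?_
    filter_upwards [ae_restrict_of_ae_restrict_of_subset (Set.Ioc_subset_Ioc_right hu.2) hgae2]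
      with y hy
    rw [hy]
  have hFRL : ∀ {u : ℝ}, u ∈ Set.Icc a b →
      leftRLInt (1 - α) a F u = leftRLInt (1 - α) a Fm u := by
    intro u hu
    unfold leftRLInt
    congr 1
    rw [intervalIntegral.integral_of_le hu.1, intervalIntegral.integral_of_le hu.1]
    refine integral_congr_ae ?_
    filter_upwards [ae_restrict_of_ae_restrict_of_subset (Set.Ioc_subset_Ioc_right hu.2) hFae2]
      with y hy
    rw [hy]
  have hAC2 : ∀ u ∈ Set.Icc a b, (∫ y in a..u, (u - y) ^ (1 - α - 1) * Fm y)
      = Real.Gamma (1 - α) * (d + ∫ s in a..u, gm s) := by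
    intro u hu
    have h0 : leftRLInt (1 - α) a Fm u = d + ∫ s in a..u, gm s :=
      (hFRL hu).symm.trans ((hAC u hu).trans (by rw [hgint hu]))
    unfold leftRLInt at h0
    rw [← h0]
    field_simp
  have hW : ∀ {t : ℝ}, t ∈ Set.Icc a b →
      (∫ y in Set.Ioo a t, (t - y) ^ (-α) * Fm y)
        = Real.Gamma (1 - α) * (d + ∫ s in a..t, gm s) := by
    intro t ht
    have h0 := hAC2 t ht
    rw [intervalIntegral.integral_of_le ht.1, integral_Ioc_eq_integral_Ioo] at h0
    rw [← h0]
    apply setIntegral_congr_fun measurableSet_Ioo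
    intro y _
    rw [show (1:ℝ) - α - 1 = -α by ring]
  -- the key identity
  have key : ∀ x : ℝ, a < x → x ≤ b →
      (IntegrableOn (fun t => leftRLInt α a gm t) (Set.Ioo a x)) ∧
      ((∫ t in Set.Ioo a x, Fm t)
        = ∫ t in Set.Ioo a x,
            ((d / Real.Gamma α) * (t - a) ^ (α - 1) + leftRLInt α a gm t)) := by
    intro x hax hxb
    -- kernel 1
    set K1 : ℝ → ℝ → ℝ := fun t y => (x - t) ^ (α - 1) * ((t - y) ^ (-α) * Fm y) with hK1
    have hK1m : AEStronglyMeasurable (Function.uncurry K1)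
        ((volume.restrict (Set.Ioo a x)).prod (volume.restrict (Set.Ioo a x))) := by
      have m1 : Measurable (fun p : ℝ × ℝ => (x - p.1) ^ (α - 1)) := by fun_prop
      have m2 : Measurable (fun p : ℝ × ℝ => (p.1 - p.2) ^ (-α)) := by fun_prop
      exact (m1.mul (m2.mul (hFm_m.comp measurable_snd))).aestronglyMeasurable
    have hK1i : ∀ y ∈ Set.Ioo a x, IntegrableOn (fun t => K1 t y) (Set.Ioo y x) := by
      intro y hy
      have h := (rl_beta_kernel_integrableOn hα hα1 hy.2).mul_const (Fm y)
      refine IntegrableOn.congr_fun h (fun t _ => ?_) measurableSet_Ioo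
      simp only [hK1]; ring
    have hK1n : IntegrableOn (fun y => ∫ t in Set.Ioo y x, ‖K1 t y‖) (Set.Ioo a x) := by
      have hBint : IntegrableOn (fun y => (Real.Gamma α * Real.Gamma (1 - α)) * ‖Fm y‖)
          (Set.Ioo a x) := (hFm_int.norm.const_mul _).integrableOn
      apply hBint.congr_fun ?_ measurableSet_Ioo
      intro y hy
      show (Real.Gamma α * Real.Gamma (1 - α)) * ‖Fm y‖ = ∫ t in Set.Ioo y x, ‖K1 t y‖
      have hcalc : Set.EqOn (fun t => ‖K1 t y‖)
          (fun t => ((x - t) ^ (α - 1) * (t - y) ^ (-α)) * ‖Fm y‖) (Set.Ioo y x) := by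
        intro t ht
        simp only [hK1, norm_mul, Real.norm_eq_abs]
        rw [abs_of_nonneg (Real.rpow_nonneg (show (0:ℝ) ≤ x - t by linarith [ht.2]) _),
            abs_of_nonneg (Real.rpow_nonneg (show (0:ℝ) ≤ t - y by linarith [ht.1]) _)]
        ring
      rw [setIntegral_congr_fun measurableSet_Ioo hcalc, integral_mul_const,
        rl_beta_kernel_eval hα hα1 hy.2]
    obtain ⟨hswap1, -⟩ := rl_swap_triangle K1 hK1m hK1i hK1n
    have hL1 : (∫ t in Set.Ioo a x, ∫ y in Set.Ioo a t, K1 t y)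
        = ∫ t in Set.Ioo a x,
            (x - t) ^ (α - 1) * (Real.Gamma (1 - α) * (d + ∫ s in a..t, gm s)) := by
      apply setIntegral_congr_fun measurableSet_Ioo
      intro t ht
      have hinner : ∫ y in Set.Ioo a t, K1 t y
          = (x - t) ^ (α - 1) * ∫ y in Set.Ioo a t, (t - y) ^ (-α) * Fm y := by
        simp only [hK1]
        exact integral_const_mul _ _
      show (∫ y in Set.Ioo a t, K1 t y) = _
      rw [hinner, hW ⟨ht.1.le, le_trans ht.2.le hxb⟩]
    have hR1 : (∫ y in Set.Ioo a x, ∫ t in Set.Ioo y x, K1 t y)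
        = (Real.Gamma α * Real.Gamma (1 - α)) * ∫ y in Set.Ioo a x, Fm y := by
      rw [← integral_const_mul]
      apply setIntegral_congr_fun measurableSet_Ioo
      intro y hy
      show (∫ t in Set.Ioo y x, K1 t y) = (Real.Gamma α * Real.Gamma (1 - α)) * Fm y
      have hinner : ∫ t in Set.Ioo y x, K1 t y
          = (∫ t in Set.Ioo y x, (x - t) ^ (α - 1) * (t - y) ^ (-α)) * Fm y := by
        rw [← integral_mul_const]
        apply setIntegral_congr_fun measurableSet_Ioo
        intro t _
        simp only [hK1]; ring
      rw [hinner, rl_beta_kernel_eval hα hα1 hy.2]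
    have hEq1 : (∫ t in Set.Ioo a x,
          (x - t) ^ (α - 1) * (Real.Gamma (1 - α) * (d + ∫ s in a..t, gm s)))
        = (Real.Gamma α * Real.Gamma (1 - α)) * ∫ y in Set.Ioo a x, Fm y := by
      rw [← hL1, hswap1, hR1]
    -- kernel 2
    set K2 : ℝ → ℝ → ℝ := fun t y => (x - t) ^ (α - 1) * gm y with hK2
    have hK2m : AEStronglyMeasurable (Function.uncurry K2)
        ((volume.restrict (Set.Ioo a x)).prod (volume.restrict (Set.Ioo a x))) := by
      have m1 : Measurable (fun p : ℝ × ℝ => (x - p.1) ^ (α - 1)) := by fun_prop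
      exact (m1.mul (hgm_m.comp measurable_snd)).aestronglyMeasurable
    have hK2i : ∀ y ∈ Set.Ioo a x, IntegrableOn (fun t => K2 t y) (Set.Ioo y x) :=
      fun y hy => (rl_integrableOn_rsub_rpow hαm1 hy.2.le).mul_const (gm y)
    have hnormint : IntegrableOn (fun y => ((x - y) ^ α / α) * |gm y|) (Set.Ioo a x) := by
      have hcont : ContinuousOn (fun y : ℝ => (x - y) ^ α / α) (Set.Icc a x) := by
        apply ContinuousOn.div_const
        apply ContinuousOn.rpow_const ((continuous_const.sub continuous_id).continuousOn)
        intro t _; right; exact hα.le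
      have hgint2 : IntegrableOn (fun y => |gm y|) (Set.Icc a x) := hgm_int.abs.integrableOn
      have base := hgint2.mul_continuousOn hcont isCompact_Icc
      apply ((base.mono_set Set.Ioo_subset_Icc_self).congr_fun ?_ measurableSet_Ioo)
      intro y _
      show |gm y| * ((x - y) ^ α / α) = ((x - y) ^ α / α) * |gm y|
      ring
    have hK2n : IntegrableOn (fun y => ∫ t in Set.Ioo y x, ‖K2 t y‖) (Set.Ioo a x) := by
      apply hnormint.congr_fun ?_ measurableSet_Ioo
      intro y hy
      show ((x - y) ^ α / α) * |gm y| = ∫ t in Set.Ioo y x, ‖K2 t y‖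
      have hcalc : Set.EqOn (fun t => ‖K2 t y‖)
          (fun t => (x - t) ^ (α - 1) * |gm y|) (Set.Ioo y x) := by
        intro t ht
        simp only [hK2, norm_mul, Real.norm_eq_abs]
        rw [abs_of_nonneg (Real.rpow_nonneg (show (0:ℝ) ≤ x - t by linarith [ht.2]) _)]
      rw [setIntegral_congr_fun measurableSet_Ioo hcalc, integral_mul_const,
        rl_integral_rsub_rpow hαm1 hy.2.le, show α - 1 + 1 = α by ring]
    obtain ⟨hswap2, hmarg2⟩ := rl_swap_triangle K2 hK2m hK2i hK2n
    have hK2inner : Set.EqOn (fun t => ∫ y in Set.Ioo a t, K2 t y)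
        (fun t => (x - t) ^ (α - 1) * ∫ s in a..t, gm s) (Set.Ioo a x) := by
      intro t ht
      show (∫ y in Set.Ioo a t, K2 t y) = (x - t) ^ (α - 1) * ∫ s in a..t, gm s
      simp only [hK2]
      rw [integral_const_mul]
      congr 1
      rw [intervalIntegral.integral_of_le ht.1.le, integral_Ioc_eq_integral_Ioo]
    have hRHS2 : (∫ y in Set.Ioo a x, ∫ t in Set.Ioo y x, K2 t y)
        = ∫ y in Set.Ioo a x, ((x - y) ^ α / α) * gm y := by
      apply setIntegral_congr_fun measurableSet_Ioo
      intro y hy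
      show (∫ t in Set.Ioo y x, K2 t y) = ((x - y) ^ α / α) * gm y
      simp only [hK2]
      rw [integral_mul_const, rl_integral_rsub_rpow hαm1 hy.2.le,
        show α - 1 + 1 = α by ring]
    have hXG : (∫ t in Set.Ioo a x, (x - t) ^ (α - 1) * ∫ s in a..t, gm s)
        = ∫ y in Set.Ioo a x, ((x - y) ^ α / α) * gm y := by
      rw [← setIntegral_congr_fun measurableSet_Ioo hK2inner, hswap2, hRHS2]
    have hXGint : IntegrableOn (fun t => (x - t) ^ (α - 1) * ∫ s in a..t, gm s)
        (Set.Ioo a x) := hmarg2.congr_fun hK2inner measurableSet_Ioo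
    -- kernel 3
    set K3 : ℝ → ℝ → ℝ := fun t y => (t - y) ^ (α - 1) * gm y with hK3
    have hK3m : AEStronglyMeasurable (Function.uncurry K3)
        ((volume.restrict (Set.Ioo a x)).prod (volume.restrict (Set.Ioo a x))) := by
      have m1 : Measurable (fun p : ℝ × ℝ => (p.1 - p.2) ^ (α - 1)) := by fun_prop
      exact (m1.mul (hgm_m.comp measurable_snd)).aestronglyMeasurable
    have hK3i : ∀ y ∈ Set.Ioo a x, IntegrableOn (fun t => K3 t y) (Set.Ioo y x) :=
      fun y hy => (rl_integrableOn_sub_rpow hαm1 hy.2.le).mul_const (gm y)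
    have hK3n : IntegrableOn (fun y => ∫ t in Set.Ioo y x, ‖K3 t y‖) (Set.Ioo a x) := by
      apply hnormint.congr_fun ?_ measurableSet_Ioo
      intro y hy
      show ((x - y) ^ α / α) * |gm y| = ∫ t in Set.Ioo y x, ‖K3 t y‖
      have hcalc : Set.EqOn (fun t => ‖K3 t y‖)
          (fun t => (t - y) ^ (α - 1) * |gm y|) (Set.Ioo y x) := by
        intro t ht
        simp only [hK3, norm_mul, Real.norm_eq_abs]
        rw [abs_of_nonneg (Real.rpow_nonneg (show (0:ℝ) ≤ t - y by linarith [ht.1]) _)]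
      rw [setIntegral_congr_fun measurableSet_Ioo hcalc, integral_mul_const,
        rl_integral_sub_rpow hαm1 hy.2.le, show α - 1 + 1 = α by ring]
    obtain ⟨hswap3, hmarg3⟩ := rl_swap_triangle K3 hK3m hK3i hK3n
    have hK3inner : Set.EqOn (fun t => ∫ y in Set.Ioo a t, K3 t y)
        (fun t => Real.Gamma α * leftRLInt α a gm t) (Set.Ioo a x) := by
      intro t ht
      show (∫ y in Set.Ioo a t, K3 t y) = Real.Gamma α * leftRLInt α a gm t
      unfold leftRLInt
      rw [intervalIntegral.integral_of_le ht.1.le, integral_Ioc_eq_integral_Ioo,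
        ← mul_assoc, mul_one_div, div_self (ne_of_gt hΓα), one_mul]
    have hRHS3 : (∫ y in Set.Ioo a x, ∫ t in Set.Ioo y x, K3 t y)
        = ∫ y in Set.Ioo a x, ((x - y) ^ α / α) * gm y := by
      apply setIntegral_congr_fun measurableSet_Ioo
      intro y hy
      show (∫ t in Set.Ioo y x, K3 t y) = ((x - y) ^ α / α) * gm y
      simp only [hK3]
      rw [integral_mul_const, rl_integral_sub_rpow hαm1 hy.2.le,
        show α - 1 + 1 = α by ring]
    have hRLgm_int : IntegrableOn (fun t => leftRLInt α a gm t) (Set.Ioo a x) := by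
      have h := hmarg3.const_mul (1 / Real.Gamma α)
      refine IntegrableOn.congr_fun h (fun t ht => ?_) measurableSet_Ioo
      show (1 / Real.Gamma α) * (∫ y in Set.Ioo a t, K3 t y) = leftRLInt α a gm t
      rw [show (∫ y in Set.Ioo a t, K3 t y) = Real.Gamma α * leftRLInt α a gm t
        from hK3inner ht]
      field_simp
    have hRLgm_val : (∫ t in Set.Ioo a x, leftRLInt α a gm t)
        = (∫ y in Set.Ioo a x, ((x - y) ^ α / α) * gm y) / Real.Gamma α := by
      have h1 : (∫ t in Set.Ioo a x, Real.Gamma α * leftRLInt α a gm t)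
          = ∫ y in Set.Ioo a x, ((x - y) ^ α / α) * gm y := by
        rw [← setIntegral_congr_fun measurableSet_Ioo hK3inner, hswap3, hRHS3]
      rw [integral_const_mul] at h1
      rw [eq_div_iff (ne_of_gt hΓα)]
      linarith [h1]
    -- combine
    have hIoo1 : (∫ t in Set.Ioo a x, (x - t) ^ (α - 1)) = (x - a) ^ α / α := by
      rw [rl_integral_rsub_rpow hαm1 hax.le, show α - 1 + 1 = α by ring]
    have hexp : (∫ t in Set.Ioo a x,
          (x - t) ^ (α - 1) * (Real.Gamma (1 - α) * (d + ∫ s in a..t, gm s)))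
        = Real.Gamma (1 - α) * (d * ((x - a) ^ α / α)
            + ∫ y in Set.Ioo a x, ((x - y) ^ α / α) * gm y) := by
      have h1 : Set.EqOn
          (fun t => (x - t) ^ (α - 1) * (Real.Gamma (1 - α) * (d + ∫ s in a..t, gm s)))
          (fun t => (Real.Gamma (1 - α) * d) * (x - t) ^ (α - 1)
            + Real.Gamma (1 - α) * ((x - t) ^ (α - 1) * ∫ s in a..t, gm s)) (Set.Ioo a x) := by
        intro t _; ring
      rw [setIntegral_congr_fun measurableSet_Ioo h1]
      rw [integral_add ((rl_integrableOn_rsub_rpow hαm1 hax.le).const_mul _)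
        (hXGint.const_mul _)]
      rw [integral_const_mul, integral_const_mul, hIoo1, hXG]
      ring
    have hFmval : (∫ t in Set.Ioo a x, Fm t)
        = (d * ((x - a) ^ α / α) + ∫ y in Set.Ioo a x, ((x - y) ^ α / α) * gm y)
          / Real.Gamma α := by
      have h2 : Real.Gamma (1 - α) * (d * ((x - a) ^ α / α)
            + ∫ y in Set.Ioo a x, ((x - y) ^ α / α) * gm y)
          = Real.Gamma (1 - α) * (Real.Gamma α * ∫ t in Set.Ioo a x, Fm t) := by
        rw [← hexp, hEq1]; ring
      have h3 := mul_left_cancel₀ (ne_of_gt hΓ1α) h2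
      rw [eq_div_iff (ne_of_gt hΓα)]
      linarith [h3]
    refine ⟨hRLgm_int, ?_⟩
    rw [integral_add ((rl_integrableOn_sub_rpow hαm1 hax.le).const_mul _) hRLgm_int]
    rw [integral_const_mul, rl_integral_sub_rpow hαm1 hax.le,
      show α - 1 + 1 = α by ring, hRLgm_val, hFmval]
    field_simp
  -- the defect function ψ
  have hh_int : IntegrableOn
      (fun t => (d / Real.Gamma α) * (t - a) ^ (α - 1) + leftRLInt α a gm t)
      (Set.Ioo a b) :=
    ((rl_integrableOn_sub_rpow hαm1 hab.le).const_mul _).add (key b hab le_rfl).1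
  set ψ : ℝ → ℝ := (Set.Ioo a b).indicator
    (fun t => Fm t - ((d / Real.Gamma α) * (t - a) ^ (α - 1) + leftRLInt α a gm t)) with hψdef
  have hψ_int : Integrable ψ volume :=
    (integrable_indicator_iff measurableSet_Ioo).2 (hFm_int.integrableOn.sub hh_int)
  have hψ_iint : ∀ u v : ℝ, IntervalIntegrable ψ volume u v :=
    fun u v => hψ_int.intervalIntegrable
  have hψ0mid : ∀ x : ℝ, a < x → x ≤ b → (∫ s in a..x, ψ s) = 0 := by
    intro x hax hxb
    rw [intervalIntegral.integral_of_le hax.le, integral_Ioc_eq_integral_Ioo, hψdef,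
      setIntegral_indicator measurableSet_Ioo]
    have hset : Set.Ioo a x ∩ Set.Ioo a b = Set.Ioo a x := by
      rw [Set.inter_eq_left]
      intro t ht
      exact ⟨ht.1, lt_of_lt_of_le ht.2 hxb⟩
    rw [hset]
    rw [integral_sub hFm_int.integrableOn (hh_int.mono_set (Set.Ioo_subset_Ioo_right hxb))]
    rw [(key x hax hxb).2, sub_self]
  have hψ0 : ∀ x : ℝ, (∫ s in a..x, ψ s) = 0 := by
    intro x
    rcases le_or_gt x a with h1 | h2
    · rw [intervalIntegral.integral_symm, intervalIntegral.integral_of_le h1,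
        integral_Ioc_eq_integral_Ioo, hψdef, setIntegral_indicator measurableSet_Ioo,
        neg_eq_zero]
      have hempty : Set.Ioo x a ∩ Set.Ioo a b = ∅ :=
        Set.eq_empty_iff_forall_notMem.2
          (fun t ⟨ht1, ht2⟩ => absurd (ht2.1.trans ht1.2) (lt_irrefl a))
      rw [hempty, setIntegral_empty]
    · rcases le_or_gt x b with h3 | h4
      · exact hψ0mid x h2 h3
      · rw [← intervalIntegral.integral_add_adjacent_intervals (hψ_iint a b) (hψ_iint b x),
          hψ0mid b hab le_rfl, zero_add, intervalIntegral.integral_of_le h4.le,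
          integral_Ioc_eq_integral_Ioo, hψdef, setIntegral_indicator measurableSet_Ioo]
        have hempty : Set.Ioo b x ∩ Set.Ioo a b = ∅ :=
          Set.eq_empty_iff_forall_notMem.2
            (fun t ⟨ht1, ht2⟩ => absurd (ht1.1.trans ht2.2) (lt_irrefl b))
        rw [hempty, setIntegral_empty]
  have hψzero : ∀ᵐ t : ℝ, ψ t = 0 := by
    filter_upwards [rl_ae_hasDerivAt_primitive ψ hψ_int a] with t ht
    have h0 : (fun u => ∫ s in a..u, ψ s) = fun _ => (0:ℝ) := funext hψ0
    rw [h0] at ht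
    exact (ht.unique (hasDerivAt_const t 0))
  constructor
  · filter_upwards [ae_restrict_of_ae hψzero, ae_restrict_mem measurableSet_Ioo, hFae]
      with t ht1 ht2 ht3
    rw [hψdef, Set.indicator_of_mem ht2] at ht1
    have hFh : Fm t = (d / Real.Gamma α) * (t - a) ^ (α - 1) + leftRLInt α a gm t := by
      linarith [ht1]
    rw [ht3, hFh, hgRL ⟨ht2.1.le, ht2.2.le⟩]
  · filter_upwards [ae_restrict_of_ae (rl_ae_hasDerivAt_primitive gm hgm_int a),
      ae_restrict_mem measurableSet_Ioo, hgae] with t ht1 ht2 ht3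
    have hev : (fun u => leftRLInt (1 - α) a F u)
        =ᶠ[𝓝 t] (fun u => d + ∫ s in a..u, gm s) := by
      filter_upwards [Ioo_mem_nhds ht2.1 ht2.2] with u hu
      have hu' : u ∈ Set.Icc a b := ⟨hu.1.le, hu.2.le⟩
      rw [hAC u hu', hgint hu']
    rw [hev.hasDerivAt_iff, ht3]
    exact ht1.const_add d
end

section
/- Let 0 < α < 1, let (a,b) be a finite interval, let f ∈ L^1((a,b)) and c ∈ ℝ, and define F(x) := c (x-a)^{α-1} + (I₋^α f)(x). Then F ∈ L^1((a,b)), for every x ∈ (a,b) one has (I₋^{1-α}F)(x) = c Γ(α) + ∫_a^x f(y) dy, and for almost every x ∈ (a,b) the left Riemann–Liouville fractional derivative of F exists at x and satisfies (D₋^α F)(x) = f(x). -/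
open MeasureTheory Real Set

open intervalIntegral

/-- Beta integrand is interval integrable on [0,1]. -/
lemma betaKernelIntegrable {p q : ℝ} (hp : 0 < p) (hq : 0 < q) :
    IntervalIntegrable (fun s : ℝ => s ^ (p - 1) * (1 - s) ^ (q - 1)) volume 0 1 := by
  have half : ∀ {p q : ℝ}, 0 < p → 0 < q →
      IntervalIntegrable (fun s : ℝ => s ^ (p - 1) * (1 - s) ^ (q - 1)) volume 0 (1/2) := by
    intro p q hp hq
    apply (intervalIntegrable_rpow' (by linarith)).mul_continuousOn
    intro s hs
    rw [uIcc_of_le (by norm_num : (0:ℝ) ≤ 1/2)] at hs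
    have : (0:ℝ) < 1 - s := by linarith [hs.2]
    exact ((continuous_const.sub continuous_id).continuousAt (x := s)).rpow_const
      (Or.inl this.ne') |>.continuousWithinAt
  refine (half hp hq).trans ?_
  have h2 := (half hq hp).comp_sub_left 1
  norm_num at h2
  apply h2.symm.congr
  intro s _
  simp [sub_sub_cancel, mul_comm]

lemma betaReal {α : ℝ} (hα : 0 < α) (hα1 : α < 1) :
    ∫ s in (0:ℝ)..1, s ^ (α - 1) * (1 - s) ^ (-α) = Real.Gamma α * Real.Gamma (1 - α) := by
  have h := Complex.Gamma_mul_Gamma_eq_betaIntegral (s := (α:ℂ)) (t := ((1 - α : ℝ) : ℂ))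
    (by simpa using hα) (by simpa using sub_pos.mpr hα1)
  have hsum : (α:ℂ) + ((1 - α : ℝ):ℂ) = 1 := by push_cast; ring
  rw [hsum, Complex.Gamma_one, one_mul] at h
  have hbeta : Complex.betaIntegral (α:ℂ) ((1 - α : ℝ):ℂ)
      = ((∫ s in (0:ℝ)..1, s ^ (α - 1) * (1 - s) ^ (-α) : ℝ) : ℂ) := by
    rw [Complex.betaIntegral, ← intervalIntegral.integral_ofReal]
    refine intervalIntegral.integral_congr_ae ?_
    have : ∀ᵐ (s : ℝ) ∂volume, s ∈ Set.uIoc (0:ℝ) 1 →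
        (s:ℂ) ^ ((α:ℂ) - 1) * (1 - (s:ℂ)) ^ (((1-α:ℝ):ℂ) - 1)
          = ((s ^ (α - 1) * (1 - s) ^ (-α) : ℝ) : ℂ) := by
      filter_upwards with s hs
      rw [Set.uIoc_of_le (by norm_num : (0:ℝ) ≤ 1)] at hs
      rw [show ((α:ℂ) - 1) = ((α - 1 : ℝ):ℂ) by push_cast; ring,
        show (((1 - α : ℝ):ℂ) - 1) = ((-α : ℝ):ℂ) by push_cast; ring,
        show (1 - (s:ℂ)) = ((1 - s : ℝ):ℂ) by push_cast; ring,
        ← Complex.ofReal_cpow hs.1.le, ← Complex.ofReal_cpow (by linarith [hs.2]),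
        ← Complex.ofReal_mul]
    exact this
  rw [hbeta, Complex.Gamma_ofReal, Complex.Gamma_ofReal, ← Complex.ofReal_mul] at h
  exact_mod_cast h.symm

section
variable {α t x : ℝ}

lemma kernelPointwise (hα : 0 < α) (hc : 0 < x - t) {y : ℝ} (hy : y ∈ Set.Ioc t x) :
    (x - y) ^ (-α) * (y - t) ^ (α - 1)
      = (x - t)⁻¹ * (((y - t)/(x - t)) ^ (α - 1) * (1 - (y - t)/(x - t)) ^ (-α)) := by
  have h1 : (0:ℝ) ≤ y - t := by linarith [hy.1]
  have h2 : (0:ℝ) ≤ x - y := by linarith [hy.2]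
  have e1 : 1 - (y - t)/(x - t) = (x - y)/(x - t) := by field_simp; ring
  have key : (x-t) ^ (α-1) * (x-t) ^ (-α) = (x-t)⁻¹ := by
    rw [← Real.rpow_add hc, show α - 1 + -α = -1 by ring, Real.rpow_neg_one]
  have hne1 : (x-t)^(α-1) ≠ 0 := (Real.rpow_pos_of_pos hc _).ne'
  have hne2 : (x-t)^(-α) ≠ 0 := (Real.rpow_pos_of_pos hc _).ne'
  rw [e1, Real.div_rpow h1 hc.le, Real.div_rpow h2 hc.le, div_eq_mul_inv, div_eq_mul_inv]
  rw [show (y-t)^(α-1) * ((x-t)^(α-1))⁻¹ * ((x-y)^(-α) * ((x-t)^(-α))⁻¹)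
      = ((x-y)^(-α) * (y-t)^(α-1)) * ((x-t)^(α-1) * (x-t)^(-α))⁻¹ by ring, key]
  rw [inv_inv]
  field_simp

lemma kernelIntegrable (hα : 0 < α) (hα1 : α < 1) (htx : t < x)
    (hbk : IntervalIntegrable (fun s : ℝ => s ^ (α - 1) * (1 - s) ^ (-α)) volume 0 1) :
    IntervalIntegrable (fun y : ℝ => (x - y) ^ (-α) * (y - t) ^ (α - 1)) volume t x := by
  have hc : (0:ℝ) < x - t := by linarith
  have comp : IntervalIntegrable
      (fun y : ℝ => (x-t)⁻¹ * (((y - t)/(x-t)) ^ (α - 1) * (1 - (y - t)/(x-t)) ^ (-α)))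
      volume t x := by
    have h1 := (hbk.comp_mul_left (c := (x - t)⁻¹)).comp_sub_right t
    have := h1.const_mul (x-t)⁻¹
    norm_num [div_eq_mul_inv, hc.ne'] at this ⊢
    convert this using 2 <;> field_simp
  apply comp.congr
  intro y hy
  rw [Set.uIoc_of_le htx.le] at hy
  exact (kernelPointwise hα hc hy).symm

lemma kernelIntegral (hα : 0 < α) (hα1 : α < 1) (htx : t < x)
    (hbv : ∫ s in (0:ℝ)..1, s ^ (α - 1) * (1 - s) ^ (-α) = Real.Gamma α * Real.Gamma (1 - α)) :
    ∫ y in t..x, (x - y) ^ (-α) * (y - t) ^ (α - 1) = Real.Gamma α * Real.Gamma (1 - α) := by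
  have hc : (0:ℝ) < x - t := by linarith
  have hsub := intervalIntegral.integral_comp_mul_add
    (a := (0:ℝ)) (b := 1) (fun y : ℝ => (x - y) ^ (-α) * (y - t) ^ (α - 1)) hc.ne' t
  norm_num at hsub
  have lhs_eq : ∫ s in (0:ℝ)..1, (x - ((x - t) * s + t)) ^ (-α) * ((x - t) * s) ^ (α - 1)
      = (x - t)⁻¹ * (Real.Gamma α * Real.Gamma (1 - α)) := by
    rw [← hbv, ← intervalIntegral.integral_const_mul]
    refine intervalIntegral.integral_congr_ae ?_
    filter_upwards with s hs
    rw [Set.uIoc_of_le (by norm_num : (0:ℝ) ≤ 1)] at hs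
    have hy : (x - t) * s + t ∈ Set.Ioc t x := by
      constructor
      · nlinarith [hs.1]
      · nlinarith [hs.2]
    have := kernelPointwise hα hc hy
    rw [show (x - t) * s + t - t = (x-t)*s by ring] at this
    rw [this]
    have hdiv : (x - t) * s / (x - t) = s := by field_simp
    rw [hdiv]
  rw [lhs_eq] at hsub
  rw [eq_comm]
  exact mul_left_cancel₀ (inv_ne_zero hc.ne') hsub
end

section
variable {a b r : ℝ} {g : ℝ → ℝ}

lemma rpow_left_intInt (hr : -1 < r) (u v : ℝ) :
    IntervalIntegrable (fun y : ℝ => (v - y) ^ r) volume u v := by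
  have := ((intervalIntegrable_rpow' hr (a := 0) (b := v - u)).comp_sub_left v).symm
  simpa using this

lemma rpow_right_intInt (hr : -1 < r) (u v : ℝ) :
    IntervalIntegrable (fun y : ℝ => (y - u) ^ r) volume u v := by
  have := (intervalIntegrable_rpow' hr (a := 0) (b := v - u)).comp_sub_right u
  simpa using this

lemma rpow_left_integral (hr : -1 < r) {u v : ℝ} :
    ∫ y in u..v, (v - y) ^ r = (v - u) ^ (r + 1) / (r + 1) := by
  rw [intervalIntegral.integral_comp_sub_left (fun s : ℝ => s ^ r) v, sub_self,
    integral_rpow (Or.inl hr), Real.zero_rpow (by linarith), sub_zero]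

lemma rpow_right_integral (hr : -1 < r) {u v : ℝ} :
    ∫ y in u..v, (y - u) ^ r = (v - u) ^ (r + 1) / (r + 1) := by
  rw [intervalIntegral.integral_comp_sub_right (fun s : ℝ => s ^ r) u, sub_self,
    integral_rpow (Or.inl hr), Real.zero_rpow (by linarith), sub_zero]

lemma Ioi_inter_Ioo {y : ℝ} (hy : y ∈ Set.Ioo a b) : Set.Ioi y ∩ Set.Ioo a b = Set.Ioo y b := by
  ext t
  constructor
  · rintro ⟨h1, _, h3⟩; exact ⟨h1, h3⟩
  · rintro ⟨h1, h2⟩; exact ⟨h1, lt_trans hy.1 h1, h2⟩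

lemma rpow_Ioo_integral (hr : -1 < r) {u v : ℝ} (huv : u ≤ v) :
    ∫ y in Set.Ioo u v, (y - u) ^ r = (v - u) ^ (r + 1) / (r + 1) := by
  rw [← MeasureTheory.integral_Ioc_eq_integral_Ioo, ← intervalIntegral.integral_of_le huv,
    rpow_right_integral hr]

/-- Fubini-type integrability of the product kernel. -/
lemma fub1_key (hr : -1 < r) (hab : a < b) (hgm : Measurable g)
    (hgi : IntegrableOn g (Set.Ioo a b)) :
    Integrable (Set.indicator {p : ℝ × ℝ | p.1 < p.2} (fun p => (p.2 - p.1) ^ r * g p.1))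
      ((volume.restrict (Set.Ioo a b)).prod (volume.restrict (Set.Ioo a b))) := by
  set μ := volume.restrict (Set.Ioo a b) with hμ
  set H : ℝ × ℝ → ℝ := Set.indicator {p : ℝ × ℝ | p.1 < p.2}
    (fun p => (p.2 - p.1) ^ r * g p.1) with hH
  have hr1 : (0:ℝ) < r + 1 := by linarith
  have hS : MeasurableSet {p : ℝ × ℝ | p.1 < p.2} := measurableSet_lt measurable_fst measurable_snd
  have hmeas : AEStronglyMeasurable H (μ.prod μ) := by
    refine (Measurable.indicator ?_ hS).aestronglyMeasurable
    fun_prop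
  rw [integrable_prod_iff hmeas]
  have inner_eq : ∀ y : ℝ, (fun x => H (y, x))
      = Set.indicator (Set.Ioi y) (fun x => (x - y) ^ r * g y) := by
    intro y
    ext x
    by_cases h : y < x <;> simp [hH, Set.indicator_apply, h, Set.mem_Ioi]
  constructor
  · rw [ae_restrict_iff' measurableSet_Ioo]
    filter_upwards with y hy
    rw [inner_eq y, integrable_indicator_iff measurableSet_Ioi]
    rw [IntegrableOn, hμ, Measure.restrict_restrict measurableSet_Ioi, Ioi_inter_Ioo hy]
    exact (((rpow_right_intInt hr y b).1).mono_set Set.Ioo_subset_Ioc_self).mul_const (g y)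
  · have hbound : Integrable (fun y => |g y| * ((b - a) ^ (r + 1) / (r + 1))) μ :=
      hgi.norm.mul_const _
    refine Integrable.mono' hbound (hmeas.norm.integral_prod_right') ?_
    rw [ae_restrict_iff' measurableSet_Ioo]
    filter_upwards with y hy
    have norm_eq : (fun x => ‖H (y, x)‖)
        = Set.indicator (Set.Ioi y) (fun x => (x - y) ^ r * |g y|) := by
      ext x
      by_cases h : y < x
      · simp only [hH, Set.indicator_apply, Set.mem_setOf_eq, h, if_true, Set.mem_Ioi,
          Real.norm_eq_abs, abs_mul]
        rw [abs_of_nonneg (Real.rpow_nonneg (by linarith) r)]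
      · simp [hH, Set.indicator_apply, h, Set.mem_Ioi]
    have val : ∫ x, ‖H (y, x)‖ ∂μ = |g y| * ((b - y) ^ (r + 1) / (r + 1)) := by
      rw [norm_eq, MeasureTheory.integral_indicator measurableSet_Ioi, hμ,
        Measure.restrict_restrict measurableSet_Ioi, Ioi_inter_Ioo hy,
        MeasureTheory.integral_mul_const, rpow_Ioo_integral hr hy.2.le, mul_comm]
    rw [val, Real.norm_eq_abs, abs_of_nonneg (mul_nonneg (abs_nonneg _)
      (div_nonneg (Real.rpow_nonneg (by linarith [hy.2]) _) hr1.le))]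
    gcongr
    · linarith [hy.2]
    · linarith [hy.1]
end

section
variable {a x α : ℝ} {g : ℝ → ℝ}

lemma Iio_inter_Ioo' {y : ℝ} (hy : y ∈ Set.Ioo a x) : Set.Iio y ∩ Set.Ioo a x = Set.Ioo a y := by
  ext t
  constructor
  · rintro ⟨h1, h2, _⟩; exact ⟨h2, h1⟩
  · rintro ⟨h1, h2⟩; exact ⟨h2, h1, lt_trans h2 hy.2⟩

lemma Ioi_inter_Ioo'' {t : ℝ} (ht : t ∈ Set.Ioo a x) : Set.Ioi t ∩ Set.Ioo a x = Set.Ioo t x := by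
  ext y
  constructor
  · rintro ⟨h1, _, h3⟩; exact ⟨h1, h3⟩
  · rintro ⟨h1, h2⟩; exact ⟨h1, lt_trans ht.1 h1, h2⟩

lemma fub2 (hα : 0 < α) (hα1 : α < 1) (hax : a < x) (hgm : Measurable g)
    (hgi : IntegrableOn g (Set.Ioo a x))
    (hbk : IntervalIntegrable (fun s : ℝ => s ^ (α - 1) * (1 - s) ^ (-α)) volume 0 1)
    (hbv : ∫ s in (0:ℝ)..1, s ^ (α - 1) * (1 - s) ^ (-α) = Real.Gamma α * Real.Gamma (1 - α)) :
    Integrable (fun y => (x - y) ^ (-α) * ∫ t in Set.Ioo a y, (y - t) ^ (α - 1) * g t)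
        (volume.restrict (Set.Ioo a x)) ∧
    ∫ y in Set.Ioo a x, ((x - y) ^ (-α) * ∫ t in Set.Ioo a y, (y - t) ^ (α - 1) * g t)
        = Real.Gamma α * Real.Gamma (1 - α) * ∫ t in Set.Ioo a x, g t := by
  set ν := volume.restrict (Set.Ioo a x) with hν
  set B := Real.Gamma α * Real.Gamma (1 - α) with hB
  set G : ℝ × ℝ → ℝ := Set.indicator {p : ℝ × ℝ | p.1 < p.2}
    (fun p => (x - p.2) ^ (-α) * (p.2 - p.1) ^ (α - 1) * g p.1) with hG
  have hS : MeasurableSet {p : ℝ × ℝ | p.1 < p.2} := measurableSet_lt measurable_fst measurable_snd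
  have hmeas : AEStronglyMeasurable G (ν.prod ν) := by
    refine (Measurable.indicator ?_ hS).aestronglyMeasurable
    fun_prop
  have inner_y : ∀ t : ℝ, (fun y => G (t, y))
      = Set.indicator (Set.Ioi t) (fun y => (x - y) ^ (-α) * (y - t) ^ (α - 1) * g t) := by
    intro t; ext y
    by_cases h : t < y <;> simp [hG, Set.indicator_apply, h, Set.mem_Ioi]
  have inner_t : ∀ y : ℝ, (fun t => G (t, y))
      = Set.indicator (Set.Iio y) (fun t => (x - y) ^ (-α) * (y - t) ^ (α - 1) * g t) := by
    intro y; ext t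
    by_cases h : t < y <;> simp [hG, Set.indicator_apply, h, Set.mem_Iio]
  -- value of the kernel integral over Ioo t x
  have kval : ∀ t ∈ Set.Ioo a x, ∫ y in Set.Ioo t x, (x - y) ^ (-α) * (y - t) ^ (α - 1) = B := by
    intro t ht
    rw [← MeasureTheory.integral_Ioc_eq_integral_Ioo, ← intervalIntegral.integral_of_le ht.2.le,
      kernelIntegral hα hα1 ht.2 hbv]
  have kint : ∀ t ∈ Set.Ioo a x,
      IntegrableOn (fun y => (x - y) ^ (-α) * (y - t) ^ (α - 1)) (Set.Ioo t x) volume := by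
    intro t ht
    exact ((kernelIntegrable hα hα1 ht.2 hbk).1).mono_set Set.Ioo_subset_Ioc_self
  have key : Integrable G (ν.prod ν) := by
    rw [integrable_prod_iff hmeas]
    constructor
    · rw [ae_restrict_iff' measurableSet_Ioo]
      filter_upwards with t ht
      rw [inner_y t, integrable_indicator_iff measurableSet_Ioi, IntegrableOn, hν,
        Measure.restrict_restrict measurableSet_Ioi, Ioi_inter_Ioo'' ht]
      exact (kint t ht).mul_const (g t)
    · have hbound : Integrable (fun t => B * |g t|) ν := hgi.norm.const_mul B
      refine hbound.congr ?_
      rw [Filter.EventuallyEq, ae_restrict_iff' measurableSet_Ioo]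
      filter_upwards with t ht
      have step1 : ∫ y, ‖G (t, y)‖ ∂ν
          = ∫ y, Set.indicator (Set.Ioo t x)
              (fun y => (x - y) ^ (-α) * (y - t) ^ (α - 1) * |g t|) y ∂ν := by
        refine MeasureTheory.integral_congr_ae ?_
        filter_upwards [ae_restrict_mem measurableSet_Ioo] with y hy
        by_cases h : t < y
        · simp only [hG, Set.indicator_apply, Set.mem_setOf_eq, h, if_true, Set.mem_Ioo,
            hy.2, and_self, Real.norm_eq_abs, abs_mul]
          rw [abs_of_nonneg (Real.rpow_nonneg (by linarith [hy.2] : (0:ℝ) ≤ x - y) _),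
            abs_of_nonneg (Real.rpow_nonneg (by linarith : (0:ℝ) ≤ y - t) _)]
        · simp [hG, Set.indicator_apply, h, Set.mem_Ioo]
      rw [eq_comm, step1, MeasureTheory.integral_indicator measurableSet_Ioo, hν,
        Measure.restrict_restrict measurableSet_Ioo,
        Set.inter_eq_self_of_subset_left (Set.Ioo_subset_Ioo ht.1.le le_rfl),
        MeasureTheory.integral_mul_const, kval t ht, mul_comm]
  -- conclusions
  have intRight : Integrable (fun y => ∫ t, G (t, y) ∂ν) ν := key.integral_prod_right
  have eqOn : ∀ y ∈ Set.Ioo a x, ∫ t, G (t, y) ∂ν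
      = (x - y) ^ (-α) * ∫ t in Set.Ioo a y, (y - t) ^ (α - 1) * g t := by
    intro y hy
    rw [inner_t y, MeasureTheory.integral_indicator measurableSet_Iio, hν,
      Measure.restrict_restrict measurableSet_Iio, Iio_inter_Ioo' hy]
    simp_rw [mul_assoc]
    rw [MeasureTheory.integral_const_mul]
  have aeq : (fun y => ∫ t, G (t, y) ∂ν)
      =ᵐ[ν] fun y => (x - y) ^ (-α) * ∫ t in Set.Ioo a y, (y - t) ^ (α - 1) * g t := by
    rw [Filter.EventuallyEq, hν, ae_restrict_iff' measurableSet_Ioo]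
    filter_upwards with y hy
    exact eqOn y hy
  constructor
  · exact intRight.congr aeq
  · have swap := MeasureTheory.integral_integral_swap (f := fun t y => G (t, y))
      (μ := ν) (ν := ν) key
    have lhs_eq : ∫ t, (∫ y, G (t, y) ∂ν) ∂ν = B * ∫ t in Set.Ioo a x, g t := by
      rw [← MeasureTheory.integral_const_mul]
      refine MeasureTheory.integral_congr_ae ?_
      filter_upwards [ae_restrict_mem measurableSet_Ioo] with t ht
      rw [inner_y t, MeasureTheory.integral_indicator measurableSet_Ioi, hν,
        Measure.restrict_restrict measurableSet_Ioi, Ioi_inter_Ioo'' ht,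
        MeasureTheory.integral_mul_const, kval t ht, mul_comm]
    calc ∫ y in Set.Ioo a x, ((x - y) ^ (-α) * ∫ t in Set.Ioo a y, (y - t) ^ (α - 1) * g t)
        = ∫ y, (∫ t, G (t, y) ∂ν) ∂ν := (MeasureTheory.integral_congr_ae aeq).symm
      _ = ∫ t, (∫ y, G (t, y) ∂ν) ∂ν := swap.symm
      _ = B * ∫ t in Set.Ioo a x, g t := lhs_eq
end

lemma primHasDeriv {g₀ : ℝ → ℝ} (hg₀ : Integrable g₀ volume) (a : ℝ) :
    ∀ᵐ x ∂(volume : Measure ℝ), HasDerivAt (fun u => ∫ t in a..u, g₀ t) (g₀ x) x := by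
  have hli : LocallyIntegrable g₀ volume := hg₀.locallyIntegrable
  filter_upwards [IsUnifLocDoublingMeasure.ae_tendsto_average_norm_sub volume hli 1] with x hx
  rw [hasDerivAt_iff_tendsto_slope]
  have hδ : Filter.Tendsto (fun y : ℝ => |y - x|) (nhdsWithin x {x}ᶜ) (nhdsWithin 0 (Set.Ioi 0)) := by
    apply tendsto_nhdsWithin_of_tendsto_nhds_of_eventually_within
    · have h0 : Filter.Tendsto (fun y : ℝ => |y - x|) (nhds x) (nhds |x - x|) :=
        ((continuous_id.sub continuous_const).abs).tendsto x
      simpa using h0.mono_left nhdsWithin_le_nhds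
    · filter_upwards [self_mem_nhdsWithin] with y hy
      have : y - x ≠ 0 := sub_ne_zero.mpr hy
      simpa [Set.mem_Ioi, abs_pos] using this
  have hA : Filter.Tendsto (fun y => ⨍ t in Metric.closedBall x |y - x|, ‖g₀ t - g₀ x‖)
      (nhdsWithin x {x}ᶜ) (nhds 0) := by
    apply hx (fun _ => x) (fun y => |y - x|) hδ
    filter_upwards with y
    simpa using Metric.mem_closedBall_self (abs_nonneg (y - x))
  rw [← tendsto_sub_nhds_zero_iff]
  have hA' : Filter.Tendsto (fun y => 2 * ⨍ t in Metric.closedBall x |y - x|, ‖g₀ t - g₀ x‖)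
      (nhdsWithin x {x}ᶜ) (nhds 0) := by
    simpa only [mul_zero] using hA.const_mul (2:ℝ)
  apply squeeze_zero_norm' ?_ hA'
  filter_upwards [self_mem_nhdsWithin] with y hy
  have hyx : y - x ≠ 0 := sub_ne_zero.mpr hy
  have hyxpos : 0 < |y - x| := abs_pos.mpr hyx
  have hint : ∀ u v : ℝ, IntervalIntegrable g₀ volume u v := fun u v => hg₀.intervalIntegrable
  -- rewrite the slope difference
  have e1 : slope (fun u => ∫ t in a..u, g₀ t) x y - g₀ x
      = (y - x)⁻¹ * ∫ t in x..y, (g₀ t - g₀ x) := by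
    rw [slope_def_field, intervalIntegral.integral_sub (hint x y) intervalIntegrable_const,
      intervalIntegral.integral_const, ← intervalIntegral.integral_interval_sub_left
        (hint a y) (hint a x)]
    field_simp
    rw [smul_eq_mul]
  rw [e1]
  have hsub : Set.uIoc x y ⊆ Metric.closedBall x |y - x| := by
    intro t ht
    rw [Metric.mem_closedBall, Real.dist_eq]
    rcases le_total x y with h | h
    · rw [Set.uIoc_of_le h] at ht
      rw [abs_of_nonneg (by linarith [ht.1] : (0:ℝ) ≤ t - x), abs_of_nonneg (by linarith)]
      linarith [ht.2]
    · rw [Set.uIoc_of_ge h] at ht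
      rw [abs_of_nonpos (by linarith [ht.2] : t - x ≤ 0), abs_of_nonpos (by linarith)]
      linarith [ht.1]
  have hfi : IntegrableOn (fun t => ‖g₀ t - g₀ x‖) (Metric.closedBall x |y - x|) volume := by
    refine (hg₀.integrableOn.sub ?_).norm
    exact integrableOn_const (by rw [Real.volume_closedBall]; exact ENNReal.ofReal_ne_top)
  have step : ‖(y - x)⁻¹ * ∫ t in x..y, (g₀ t - g₀ x)‖
      ≤ |y - x|⁻¹ * ∫ t in Metric.closedBall x |y - x|, ‖g₀ t - g₀ x‖ := by
    rw [norm_mul, norm_inv, Real.norm_eq_abs (y - x)]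
    apply mul_le_mul_of_nonneg_left _ (by positivity)
    refine le_trans intervalIntegral.norm_integral_le_integral_norm_uIoc ?_
    exact setIntegral_mono_set hfi
      (Filter.Eventually.of_forall fun t => norm_nonneg _)
      (HasSubset.Subset.eventuallyLE hsub)
  refine step.trans ?_
  have hvol : (volume (Metric.closedBall x |y - x|)).toReal = 2 * |y - x| := by
    rw [Real.volume_closedBall, ENNReal.toReal_ofReal (by positivity)]
  refine le_of_eq ?_
  rw [MeasureTheory.setAverage_eq, measureReal_def, hvol, smul_eq_mul]
  field_simp

theorem stmt5 (α a b c : ℝ) (hα : 0 < α) (hα1 : α < 1) (hab : a < b)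
    (f : ℝ → ℝ) (hf : IntegrableOn f (Set.Ioo a b))
    (F : ℝ → ℝ) (hFdef : ∀ x, F x = c * (x - a) ^ (α - 1) + leftRLInt α a f x) :
    IntegrableOn F (Set.Ioo a b) ∧
    (∀ x ∈ Set.Ioo a b,
      leftRLInt (1 - α) a F x = c * Real.Gamma α + ∫ y in a..x, f y) ∧
    (∀ᵐ x ∂(volume.restrict (Set.Ioo a b)),
      HasDerivAt (fun t => leftRLInt (1 - α) a F t) (f x) x) := by
  have hΓα : 0 < Real.Gamma α := Real.Gamma_pos_of_pos hα
  have hΓα1 : 0 < Real.Gamma (1 - α) := Real.Gamma_pos_of_pos (by linarith)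
  have hr : (-1 : ℝ) < α - 1 := by linarith
  have hbk := betaKernelIntegrable hα (by linarith : (0:ℝ) < 1 - α)
  have hbk' : IntervalIntegrable (fun s : ℝ => s ^ (α - 1) * (1 - s) ^ (-α)) volume 0 1 := by
    have : (1 : ℝ) - α - 1 = -α := by ring
    rwa [this] at hbk
  have hbv := betaReal hα hα1
  -- replace f by a measurable representative g
  obtain ⟨g, hgsm, hfg⟩ := hf.aestronglyMeasurable
  have hgm : Measurable g := hgsm.measurable
  have hgi : IntegrableOn g (Set.Ioo a b) := hf.congr hfg
  have hsub : ∀ s : Set ℝ, s ⊆ Set.Ioo a b → f =ᵐ[volume.restrict s] g := fun s hs =>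
    ae_restrict_of_ae_restrict_of_subset hs hfg
  -- the RL integral of f equals an Ioo-set integral of g
  have RLfg : ∀ y ∈ Set.Ioo a b, leftRLInt α a f y
      = (1 / Real.Gamma α) * ∫ t in Set.Ioo a y, (y - t) ^ (α - 1) * g t := by
    intro y hy
    unfold leftRLInt
    congr 1
    rw [intervalIntegral.integral_of_le hy.1.le, MeasureTheory.integral_Ioc_eq_integral_Ioo]
    refine MeasureTheory.integral_congr_ae ?_
    filter_upwards [hsub (Set.Ioo a y) (Set.Ioo_subset_Ioo le_rfl hy.2.le)] with t ht
    rw [ht]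
  -- similarly for set integrals of f itself
  have Ifg : ∀ y ∈ Set.Ioo a b, (∫ t in a..y, f t) = ∫ t in Set.Ioo a y, g t := by
    intro y hy
    rw [intervalIntegral.integral_of_le hy.1.le, MeasureTheory.integral_Ioc_eq_integral_Ioo]
    exact MeasureTheory.integral_congr_ae (hsub _ (Set.Ioo_subset_Ioo le_rfl hy.2.le))
  set μ := volume.restrict (Set.Ioo a b) with hμ
  -- PART 1
  have part1 : IntegrableOn F (Set.Ioo a b) := by
    have piece_a : Integrable (fun y : ℝ => c * (y - a) ^ (α - 1)) μ :=
      (((rpow_right_intInt hr a b).1).mono_set Set.Ioo_subset_Ioc_self).const_mul c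
    have key := fub1_key hr hab hgm hgi
    have Hint : Integrable (fun x : ℝ => ∫ y, Set.indicator {p : ℝ × ℝ | p.1 < p.2}
        (fun p => (p.2 - p.1) ^ (α - 1) * g p.1) (y, x) ∂μ) μ := key.integral_prod_right
    have piece_b : Integrable (fun y : ℝ => leftRLInt α a f y) μ := by
      refine (Hint.const_mul (1 / Real.Gamma α)).congr ?_
      rw [Filter.EventuallyEq, hμ, ae_restrict_iff' measurableSet_Ioo]
      filter_upwards with x hx
      have inner_eq : (fun y : ℝ => Set.indicator {p : ℝ × ℝ | p.1 < p.2}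
          (fun p => (p.2 - p.1) ^ (α - 1) * g p.1) (y, x))
          = Set.indicator (Set.Iio x) (fun y => (x - y) ^ (α - 1) * g y) := by
        ext y
        by_cases h : y < x <;> simp [Set.indicator_apply, h, Set.mem_Iio]
      rw [inner_eq, MeasureTheory.integral_indicator measurableSet_Iio,
        Measure.restrict_restrict measurableSet_Iio, Iio_inter_Ioo' hx, RLfg x hx]
    refine (piece_a.add piece_b).congr ?_
    filter_upwards with y
    simp [hFdef y]
  -- PART 2
  have part2 : ∀ x ∈ Set.Ioo a b,
      leftRLInt (1 - α) a F x = c * Real.Gamma α + ∫ y in a..x, f y := by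
    intro x hx
    have hax : a < x := hx.1
    have hgi' : IntegrableOn g (Set.Ioo a x) := hgi.mono_set (Set.Ioo_subset_Ioo le_rfl hx.2.le)
    obtain ⟨f2int, f2val⟩ := fub2 hα hα1 hax hgm hgi' hbk' hbv
    have hexp : (1 : ℝ) - α - 1 = -α := by ring
    have K1int : IntegrableOn (fun y => (x - y) ^ (-α) * (y - a) ^ (α - 1)) (Set.Ioo a x) :=
      ((kernelIntegrable hα hα1 hax hbk').1).mono_set Set.Ioo_subset_Ioc_self
    have K1val : ∫ y in Set.Ioo a x, (x - y) ^ (-α) * (y - a) ^ (α - 1)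
        = Real.Gamma α * Real.Gamma (1 - α) := by
      rw [← MeasureTheory.integral_Ioc_eq_integral_Ioo, ← intervalIntegral.integral_of_le hax.le,
        kernelIntegral hα hα1 hax hbv]
    have main_int : ∫ y in a..x, (x - y) ^ ((1 - α) - 1) * F y
        = c * (Real.Gamma α * Real.Gamma (1 - α))
          + (1 / Real.Gamma α) * (Real.Gamma α * Real.Gamma (1 - α) * ∫ t in Set.Ioo a x, g t) := by
      rw [intervalIntegral.integral_of_le hax.le, MeasureTheory.integral_Ioc_eq_integral_Ioo]
      have congr1 : ∫ y in Set.Ioo a x, (x - y) ^ ((1 - α) - 1) * F y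
          = ∫ y in Set.Ioo a x, (c * ((x - y) ^ (-α) * (y - a) ^ (α - 1))
            + (1 / Real.Gamma α) * ((x - y) ^ (-α) * ∫ t in Set.Ioo a y, (y - t) ^ (α - 1) * g t)) := by
        refine MeasureTheory.setIntegral_congr_fun measurableSet_Ioo ?_
        intro y hy
        have hy' : y ∈ Set.Ioo a b := ⟨hy.1, lt_trans hy.2 hx.2⟩
        show (x - y) ^ ((1 - α) - 1) * F y = c * ((x - y) ^ (-α) * (y - a) ^ (α - 1))
          + (1 / Real.Gamma α) * ((x - y) ^ (-α) * ∫ t in Set.Ioo a y, (y - t) ^ (α - 1) * g t)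
        rw [hexp, hFdef y, RLfg y hy']
        ring
      rw [congr1, MeasureTheory.integral_add (K1int.const_mul c) (f2int.const_mul _),
        MeasureTheory.integral_const_mul, MeasureTheory.integral_const_mul, K1val, f2val]
    unfold leftRLInt
    rw [main_int, Ifg x hx]
    field_simp
  refine ⟨part1, part2, ?_⟩
  -- PART 3
  set g₀ : ℝ → ℝ := (Set.Ioo a b).indicator g with hg₀def
  have hg₀ : Integrable g₀ volume := (integrable_indicator_iff measurableSet_Ioo).mpr hgi
  have prim_eq : ∀ u ∈ Set.Ioo a b,
      leftRLInt (1 - α) a F u = c * Real.Gamma α + ∫ t in a..u, g₀ t := by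
    intro u hu
    rw [part2 u hu, Ifg u hu]
    congr 1
    rw [intervalIntegral.integral_of_le hu.1.le, MeasureTheory.integral_Ioc_eq_integral_Ioo]
    refine (MeasureTheory.setIntegral_congr_fun measurableSet_Ioo ?_).symm
    intro t ht
    have htm : t ∈ Set.Ioo a b := ⟨ht.1, lt_trans ht.2 hu.2⟩
    simp [hg₀def, Set.indicator_of_mem htm]
  filter_upwards [ae_restrict_of_ae (primHasDeriv hg₀ a), ae_restrict_mem measurableSet_Ioo,
    hfg] with x hxD hxmem hxfg
  have h1 : HasDerivAt (fun u => c * Real.Gamma α + ∫ t in a..u, g₀ t) (g₀ x) x :=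
    hxD.const_add (c * Real.Gamma α)
  have hev : (fun t => leftRLInt (1 - α) a F t)
      =ᶠ[nhds x] (fun u => c * Real.Gamma α + ∫ t in a..u, g₀ t) := by
    filter_upwards [Ioo_mem_nhds hxmem.1 hxmem.2] with u hu
    exact prim_eq u hu
  have h2 : HasDerivAt (fun t => leftRLInt (1 - α) a F t) (g₀ x) x :=
    h1.congr_of_eventuallyEq hev
  have : g₀ x = f x := by
    rw [hg₀def, Set.indicator_of_mem hxmem, ← hxfg]
  rwa [this] at h2
end

section
/- Let 0 < α < 1 and let f, F ∈ L^1(ℝ). If F(x) = (1/Γ(α)) ∫_{-∞}^x (x-y)^{α-1} f(y) dy for almost every x ∈ ℝ, then for almost every x ∈ ℝ the left Liouville fractional derivative of F exists at x and equals f(x), i.e., (d/dx)[(1/Γ(1-α)) ∫_{-∞}^x (x-y)^{-α} F(y) dy] = f(x) for almost every x. -/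
open MeasureTheory Real Set

/-- The left Liouville fractional integral of order `σ` on `ℝ`:
`(I₋^σ f)(x) = (1/Γ(σ)) ∫_{-∞}^x (x-y)^{σ-1} f(y) dy`. -/
noncomputable def leftLiouvilleInt (σ : ℝ) (f : ℝ → ℝ) (x : ℝ) : ℝ :=
  (1 / Real.Gamma σ) * ∫ y in Set.Iic x, (x - y) ^ (σ - 1) * f y

open intervalIntegral Filter Metric Topology

lemma beta_int {α : ℝ} (hα : 0 < α) (hα1 : α < 1) :
    IntervalIntegrable (fun t : ℝ => t ^ (α - 1) * (1 - t) ^ (-α)) volume 0 1 := by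
  have hc := Complex.betaIntegral_convergent (u := (α : ℂ)) (v := ((1 - α : ℝ) : ℂ))
    (by simpa using hα) (by simpa using sub_pos.2 hα1)
  rw [intervalIntegrable_iff] at hc ⊢
  refine MeasureTheory.IntegrableOn.congr_fun hc.re (fun t ht => ?_) measurableSet_uIoc
  rw [uIoc_of_le (by norm_num : (0:ℝ) ≤ 1)] at ht
  have h0 : (0:ℝ) ≤ t := ht.1.le
  have h1 : (0:ℝ) ≤ 1 - t := by linarith [ht.2]
  have e1 : ((t:ℂ)) ^ ((α:ℂ) - 1) = ((t ^ (α - 1) : ℝ) : ℂ) := by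
    rw [Complex.ofReal_cpow h0]; push_cast; ring_nf
  have e2 : ((1:ℂ) - t) ^ (((1 - α : ℝ) : ℂ) - 1) = (((1 - t) ^ (-α) : ℝ) : ℂ) := by
    rw [show ((1:ℂ) - t) = (((1 - t : ℝ)) : ℂ) by push_cast; ring,
      Complex.ofReal_cpow h1]; push_cast; ring_nf
  simp only [e1, e2, ← Complex.ofReal_mul, Complex.ofReal_re, RCLike.ofReal_re]
  rfl

lemma beta_val {α : ℝ} (hα : 0 < α) (hα1 : α < 1) :
    ∫ t in (0:ℝ)..1, t ^ (α - 1) * (1 - t) ^ (-α) = Real.Gamma α * Real.Gamma (1 - α) := by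
  have hc := Complex.Gamma_mul_Gamma_eq_betaIntegral (s := (α : ℂ)) (t := ((1 - α : ℝ) : ℂ))
    (by simpa using hα) (by simpa using sub_pos.2 hα1)
  rw [show (α : ℂ) + ((1 - α : ℝ) : ℂ) = 1 by push_cast; ring, Complex.Gamma_one, one_mul] at hc
  rw [Complex.betaIntegral] at hc
  have : ∫ t in (0:ℝ)..1, (t:ℂ) ^ ((α:ℂ) - 1) * ((1:ℂ) - t) ^ (((1 - α : ℝ) : ℂ) - 1)
      = ((∫ t in (0:ℝ)..1, t ^ (α - 1) * (1 - t) ^ (-α) : ℝ) : ℂ) := by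
    rw [← intervalIntegral.integral_ofReal]
    refine intervalIntegral.integral_congr fun t ht => ?_
    rw [uIcc_of_le (by norm_num : (0:ℝ) ≤ 1)] at ht
    have h0 : (0:ℝ) ≤ t := ht.1
    have h1 : (0:ℝ) ≤ 1 - t := by linarith [ht.2]
    have e1 : ((t:ℂ)) ^ ((α:ℂ) - 1) = ((t ^ (α - 1) : ℝ) : ℂ) := by
      rw [Complex.ofReal_cpow h0]; push_cast; ring_nf
    have e2 : ((1:ℂ) - t) ^ (((1 - α : ℝ) : ℂ) - 1) = (((1 - t) ^ (-α) : ℝ) : ℂ) := by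
      rw [show ((1:ℂ) - t) = (((1 - t : ℝ)) : ℂ) by push_cast; ring,
        Complex.ofReal_cpow h1]; push_cast; ring_nf
    rw [e1, e2, ← Complex.ofReal_mul]
  rw [this] at hc
  rw [Complex.Gamma_ofReal, Complex.Gamma_ofReal, ← Complex.ofReal_mul] at hc
  exact_mod_cast hc.symm

lemma kernel_eq {α : ℝ} {z x c : ℝ} (hc : c = x - z) (hc0 : 0 < c) {y : ℝ}
    (hy : y ∈ Set.Icc z x) :
    c⁻¹ * (((y - z) / c) ^ (α - 1) * (1 - (y - z) / c) ^ (-α))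
      = (x - y) ^ (-α) * (y - z) ^ (α - 1) := by
  have h1 : 1 - (y - z) / c = (x - y) / c := by
    rw [eq_comm, eq_sub_iff_add_eq, ← add_div,
      show x - y + (y - z) = c by rw [hc]; ring]
    exact div_self hc0.ne'
  have hyz : 0 ≤ y - z := by linarith [hy.1]
  have hxy : 0 ≤ x - y := by linarith [hy.2]
  rw [h1, Real.div_rpow hyz hc0.le, Real.div_rpow hxy hc0.le]
  have hcc : c ^ (α - 1) * c ^ (-α) = c⁻¹ := by
    rw [← Real.rpow_add hc0, show α - 1 + -α = -1 by ring, Real.rpow_neg_one]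
  rw [div_mul_div_comm, hcc, mul_div_assoc' , mul_comm]
  exact (mul_div_cancel_right₀ _ (inv_ne_zero hc0.ne')).trans (mul_comm _ _)

lemma kernel_intOn {α : ℝ} (hα : 0 < α) (hα1 : α < 1) {z x : ℝ} (hzx : z < x) :
    IntegrableOn (fun y => (x - y) ^ (-α) * (y - z) ^ (α - 1)) (Ioo z x) volume := by
  set c := x - z with hc
  have hc0 : 0 < c := by simp only [hc]; linarith
  have e : c + z = x := by rw [hc]; ring
  have h1 : IntervalIntegrable (fun y : ℝ => ((y - z) * c⁻¹) ^ (α - 1)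
      * (1 - (y - z) * c⁻¹) ^ (-α)) volume z x := by
    have := ((beta_int hα hα1).comp_mul_right (c := c⁻¹)).comp_sub_right z
    simpa [hc0.ne', div_eq_mul_inv, e] using this
  have h2 := (h1.const_mul c⁻¹)
  rw [intervalIntegrable_iff_integrableOn_Ioo_of_le hzx.le] at h2
  refine h2.congr_fun (fun y hy => ?_) measurableSet_Ioo
  have := kernel_eq (α := α) hc hc0 (Ioo_subset_Icc_self hy)
  rw [← this, div_eq_mul_inv]

lemma kernel_val {α : ℝ} (hα : 0 < α) (hα1 : α < 1) {z x : ℝ} (hzx : z < x) :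
    ∫ y in Ioo z x, (x - y) ^ (-α) * (y - z) ^ (α - 1)
      = Real.Gamma α * Real.Gamma (1 - α) := by
  set c := x - z with hc
  have hc0 : 0 < c := by simp only [hc]; linarith
  have key := intervalIntegral.integral_comp_mul_add (a := z) (b := x)
    (f := fun t : ℝ => t ^ (α - 1) * (1 - t) ^ (-α)) (by positivity : c⁻¹ ≠ 0) (-(z/c))
  have e0 : c⁻¹ * z + -(z/c) = 0 := by field_simp; ring
  have e1 : c⁻¹ * x + -(z/c) = 1 := by
    have hne : x - z ≠ 0 := sub_ne_zero.2 hzx.ne'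
    rw [hc]; field_simp; ring
  rw [e0, e1, inv_inv, beta_val hα hα1] at key
  have step : ∫ y in z..x, (x - y) ^ (-α) * (y - z) ^ (α - 1)
      = c⁻¹ • ∫ y in z..x,
        (fun t : ℝ => t ^ (α - 1) * (1 - t) ^ (-α)) (c⁻¹ * y + -(z/c)) := by
    rw [← intervalIntegral.integral_smul]
    refine (intervalIntegral.integral_congr fun y hy => ?_).symm
    rw [uIcc_of_le hzx.le] at hy
    have harg : c⁻¹ * y + -(z/c) = (y - z) / c := by
      rw [sub_div]; ring
    simp only [smul_eq_mul, harg]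
    exact kernel_eq hc hc0 hy
  rw [key, smul_eq_mul, smul_eq_mul, ← mul_assoc, inv_mul_cancel₀ hc0.ne', one_mul] at step
  rw [← MeasureTheory.integral_Ioc_eq_integral_Ioo, ← intervalIntegral.integral_of_le hzx.le]
  exact step

lemma partA {α : ℝ} (hα : 0 < α) (hα1 : α < 1) {f F : ℝ → ℝ}
    (hf : Integrable f (volume : Measure ℝ)) (hF : Integrable F (volume : Measure ℝ))
    (h : ∀ᵐ x : ℝ, F x = leftLiouvilleInt α f x) (x : ℝ) :
    leftLiouvilleInt (1 - α) F x = ∫ z in Iic x, f z := by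
  have hΓα : 0 < Real.Gamma α := Real.Gamma_pos_of_pos hα
  have hΓα' : 0 < Real.Gamma (1 - α) := Real.Gamma_pos_of_pos (by linarith)
  set C := Real.Gamma α * Real.Gamma (1 - α) with hC
  set S : Set (ℝ × ℝ) := {p : ℝ × ℝ | p.2 < p.1 ∧ p.1 < x} with hS
  have hSm : MeasurableSet S :=
    (measurableSet_lt measurable_snd measurable_fst).inter
      (measurableSet_lt measurable_fst measurable_const)
  set K : ℝ × ℝ → ℝ := fun q => (x - q.1) ^ (-α) * (q.1 - q.2) ^ (α - 1) with hK
  set K' : ℝ × ℝ → ℝ := fun q => Real.exp (Real.log (x - q.1) * (-α))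
      * Real.exp (Real.log (q.1 - q.2) * (α - 1)) with hK'
  have hK'm : Measurable K' :=
    (((Real.measurable_log.comp (measurable_const.sub measurable_fst)).mul
      measurable_const).exp).mul
      (((Real.measurable_log.comp (measurable_fst.sub measurable_snd)).mul
        measurable_const).exp)
  have hKK' : S.indicator K = S.indicator K' := by
    funext p
    by_cases hp : p ∈ S
    · have h1 : 0 < x - p.1 := sub_pos.2 hp.2
      have h2 : 0 < p.1 - p.2 := sub_pos.2 hp.1
      rw [indicator_of_mem hp, indicator_of_mem hp]
      show (x - p.1) ^ (-α) * (p.1 - p.2) ^ (α - 1) = _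
      rw [Real.rpow_def_of_pos h1, Real.rpow_def_of_pos h2]
    · rw [indicator_of_notMem hp, indicator_of_notMem hp]
  set φ : ℝ → ℝ → ℝ := fun y z => S.indicator K (y, z) * f z with hφ
  -- fiber description in y for fixed z
  have fiber_y : ∀ (z y : ℝ), φ y z
      = (Ioo z x).indicator (fun y => (x - y) ^ (-α) * (y - z) ^ (α - 1)) y * f z := by
    intro z y
    by_cases hy : y ∈ Ioo z x
    · have h1 : (y, z) ∈ S := ⟨(mem_Ioo.1 hy).1, (mem_Ioo.1 hy).2⟩
      show S.indicator K (y, z) * f z = _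
      rw [indicator_of_mem h1, indicator_of_mem hy]
    · have h1 : (y, z) ∉ S := fun hm => hy (mem_Ioo.2 ⟨hm.1, hm.2⟩)
      show S.indicator K (y, z) * f z = _
      rw [indicator_of_notMem h1, indicator_of_notMem hy]
  -- fiber description in z for fixed y
  have fiber_z : ∀ y : ℝ, y < x → ∀ z : ℝ, φ y z
      = (Iio y).indicator (fun z => (x - y) ^ (-α) * ((y - z) ^ (α - 1) * f z)) z := by
    intro y hyx z
    by_cases hz : z < y
    · have h1 : (y, z) ∈ S := ⟨hz, hyx⟩
      simp [hφ, hS, hK, Set.indicator_apply, hz, hyx, indicator_of_mem h1, indicator_of_mem (mem_Iio.2 hz)]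
      ring
    · have h1 : (y, z) ∉ S := fun hmem => hz hmem.1
      simp [hφ, indicator_of_notMem h1, indicator_of_notMem (by simpa using hz : z ∉ Iio y)]
  have fiber_z' : ∀ y : ℝ, ¬ y < x → ∀ z : ℝ, φ y z = 0 := by
    intro y hyx z
    have h1 : (y, z) ∉ S := fun hmem => hyx hmem.2
    simp [hφ, indicator_of_notMem h1]
  -- measurability
  have hmeas : AEStronglyMeasurable (fun p : ℝ × ℝ => φ p.1 p.2)
      ((volume : Measure ℝ).prod volume) := by
    have : (fun p : ℝ × ℝ => φ p.1 p.2) = fun p => S.indicator K p * f p.2 := by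
      funext p; simp [hφ]
    rw [this, hKK']
    exact ((hK'm.indicator hSm).aestronglyMeasurable).mul hf.1.comp_snd
  -- integrability of fibers in y
  have int_fiber_y : ∀ z : ℝ, Integrable (fun y => φ y z) volume := by
    intro z
    simp only [fiber_y]
    by_cases hz : z < x
    · exact (((integrable_indicator_iff measurableSet_Ioo).2 (kernel_intOn hα hα1 hz))).mul_const _
    · have : Ioo z x = ∅ := Ioo_eq_empty (by simpa using hz)
      simp [this]
  -- norm integrals
  have norm_fiber : ∀ z : ℝ, (∫ y, ‖φ y z‖) = (Iio x).indicator (fun z => C * |f z|) z := by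
    intro z
    simp only [fiber_y]
    by_cases hz : z < x
    · have hpos : ∀ y ∈ Ioo z x, 0 ≤ (x - y) ^ (-α) * (y - z) ^ (α - 1) := fun y hy =>
        mul_nonneg (Real.rpow_nonneg (by linarith [hy.2]) _)
          (Real.rpow_nonneg (by linarith [hy.1]) _)
      have : ∀ y : ℝ, ‖(Ioo z x).indicator (fun y => (x - y) ^ (-α) * (y - z) ^ (α - 1)) y * f z‖
          = (Ioo z x).indicator (fun y => (x - y) ^ (-α) * (y - z) ^ (α - 1)) y * |f z| := by
        intro y
        rw [norm_mul, Real.norm_eq_abs, Real.norm_eq_abs, abs_of_nonneg]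
        exact indicator_nonneg hpos y
      simp_rw [this]
      rw [MeasureTheory.integral_mul_const, MeasureTheory.integral_indicator measurableSet_Ioo,
        kernel_val hα hα1 hz, indicator_of_mem (mem_Iio.2 hz)]
    · have he : Ioo z x = ∅ := Ioo_eq_empty (by simpa using hz)
      simp [he, indicator_of_notMem (by simpa using hz : z ∉ Iio x)]
  -- integrability of the double function
  have hint : Integrable (fun p : ℝ × ℝ => φ p.1 p.2) ((volume : Measure ℝ).prod volume) := by
    rw [MeasureTheory.integrable_prod_iff' hmeas]
    constructor
    · exact Filter.Eventually.of_forall int_fiber_y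
    · refine (((hf.abs.const_mul C).indicator (measurableSet_Iio (a := x)))).congr ?_
      exact Filter.Eventually.of_forall fun z => (norm_fiber z).symm
  -- swap
  have swap := MeasureTheory.integral_integral_swap (f := φ) hint
  -- compute RHS of swap
  have rhs : (∫ z, ∫ y, φ y z) = C * ∫ z in Iic x, f z := by
    have : ∀ z : ℝ, (∫ y, φ y z) = (Iio x).indicator (fun z => C * f z) z := by
      intro z
      simp only [fiber_y]
      by_cases hz : z < x
      · rw [MeasureTheory.integral_mul_const, MeasureTheory.integral_indicator measurableSet_Ioo,
          kernel_val hα hα1 hz, indicator_of_mem (mem_Iio.2 hz), mul_comm]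
      · have he : Ioo z x = ∅ := Ioo_eq_empty (by simpa using hz)
        simp [he, indicator_of_notMem (by simpa using hz : z ∉ Iio x)]
    simp_rw [this]
    rw [MeasureTheory.integral_indicator measurableSet_Iio, MeasureTheory.integral_const_mul,
      setIntegral_congr_set Iio_ae_eq_Iic]
  -- compute LHS of swap
  have lhs : (∫ y, ∫ z, φ y z) = Real.Gamma α * ∫ y in Iic x, (x - y) ^ (-α) * F y := by
    have e1 : ∀ y : ℝ, (∫ z, φ y z)
        = (Iio x).indicator (fun y => (x - y) ^ (-α) * ∫ z in Iio y, (y - z) ^ (α - 1) * f z) y := by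
      intro y
      by_cases hyx : y < x
      · simp only [fiber_z y hyx]
        rw [MeasureTheory.integral_indicator measurableSet_Iio,
          MeasureTheory.integral_const_mul, indicator_of_mem (mem_Iio.2 hyx)]
      · simp only [fiber_z' y hyx]
        rw [indicator_of_notMem (by simpa using hyx : y ∉ Iio x)]
        simp
    simp_rw [e1]
    rw [MeasureTheory.integral_indicator measurableSet_Iio, setIntegral_congr_set Iio_ae_eq_Iic]
    rw [← MeasureTheory.integral_const_mul]
    refine setIntegral_congr_ae measurableSet_Iic ?_
    filter_upwards [h] with y hy _
    rw [hy, leftLiouvilleInt]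
    rw [setIntegral_congr_set (Iio_ae_eq_Iic (a := y)).symm]
    field_simp
  rw [rhs, lhs] at swap
  have key : ∫ y in Iic x, (x - y) ^ (-α) * F y = Real.Gamma (1 - α) * ∫ z in Iic x, f z := by
    refine mul_left_cancel₀ hΓα.ne' ?_
    rw [swap, hC]; ring
  rw [leftLiouvilleInt, show (1 - α) - 1 = -α by ring, key]
  field_simp

lemma partB {f : ℝ → ℝ} (hf : Integrable f (volume : Measure ℝ)) :
    ∀ᵐ x : ℝ, HasDerivAt (fun t => ∫ z in Iic t, f z) (f x) x := by
  have H : ∀ᵐ (x : ℝ), ∀ {ι : Type} {l : Filter ι} (w δ : ι → ℝ),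
      Tendsto δ l (𝓝[>] 0) → (∀ᶠ j in l, x ∈ closedBall (w j) (1 * δ j)) →
      Tendsto (fun j => ⨍ y in closedBall (w j) (δ j), ‖f y - f x‖) l (𝓝 0) :=
    IsUnifLocDoublingMeasure.ae_tendsto_average_norm_sub _ hf.locallyIntegrable 1
  filter_upwards [H] with x hx
  set w : ℝ → ℝ := fun t => (x + t) / 2 with hw
  set δ : ℝ → ℝ := fun t => |t - x| / 2 with hδ
  have hδt : Tendsto δ (𝓝[≠] x) (𝓝[>] 0) := by
    apply tendsto_nhdsWithin_of_tendsto_nhds_of_eventually_within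
    · have : Tendsto δ (𝓝 x) (𝓝 (|x - x| / 2)) :=
        (((continuous_id.sub continuous_const).abs.div_const 2).tendsto x)
      simpa using this.mono_left nhdsWithin_le_nhds
    · filter_upwards [self_mem_nhdsWithin] with t ht
      have : t - x ≠ 0 := sub_ne_zero.2 ht
      simp only [hδ, mem_Ioi]
      positivity
  have hxw : ∀ᶠ t in 𝓝[≠] x, x ∈ closedBall (w t) (1 * δ t) := by
    refine Eventually.of_forall fun t => ?_
    rw [mem_closedBall, Real.dist_eq, one_mul]
    show |x - (x + t) / 2| ≤ |t - x| / 2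
    rw [show x - (x + t) / 2 = (x - t) / 2 by ring, abs_div, abs_sub_comm x t]
    simp
  have havg := hx w δ hδt hxw
  set G : ℝ → ℝ := fun t => ∫ z in Iic t, f z with hG
  rw [hasDerivAt_iff_tendsto_slope, tendsto_iff_norm_sub_tendsto_zero]
  refine squeeze_zero' (Eventually.of_forall fun t => norm_nonneg _) ?_ havg
  filter_upwards [self_mem_nhdsWithin] with t ht
  have htx : t ≠ x := ht
  have htx' : t - x ≠ 0 := sub_ne_zero.2 htx
  have hGt : G t - G x = ∫ z in x..t, f z :=
    intervalIntegral.integral_Iic_sub_Iic hf.integrableOn hf.integrableOn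
  have hball : closedBall (w t) (δ t) = uIcc x t := by
    rw [Real.closedBall_eq_Icc, uIcc]
    rcases le_total x t with hle | hle
    · rw [show w t - δ t = x by simp [hw, hδ, abs_of_nonneg (sub_nonneg.2 hle)]; ring,
        show w t + δ t = t by simp [hw, hδ, abs_of_nonneg (sub_nonneg.2 hle)]; ring,
        min_eq_left hle, max_eq_right hle]
    · rw [show w t - δ t = t by
          simp [hw, hδ, abs_of_nonpos (sub_nonpos.2 hle)]; ring,
        show w t + δ t = x by
          simp [hw, hδ, abs_of_nonpos (sub_nonpos.2 hle)]; ring,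
        min_eq_right hle, max_eq_left hle]
  have hsubset : Set.uIoc x t ⊆ closedBall (w t) (δ t) := by
    rw [hball, Set.uIoc, Set.uIcc]
    exact Ioc_subset_Icc_self
  have hIntBall : IntegrableOn (fun z => ‖f z - f x‖) (closedBall (w t) (δ t)) volume := by
    refine ((hf.integrableOn.sub (integrableOn_const ?_))).norm
    exact measure_closedBall_lt_top.ne
  have e1 : slope G x t - f x = (t - x)⁻¹ • ((∫ z in x..t, f z) - (t - x) • f x) := by
    rw [slope_def_field, hGt, smul_eq_mul, smul_eq_mul]
    field_simp

  have e2 : (∫ z in x..t, f z) - (t - x) • f x = ∫ z in x..t, (f z - f x) := by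
    rw [intervalIntegral.integral_sub hf.intervalIntegrable
      intervalIntegrable_const, intervalIntegral.integral_const]
  have hvol : (volume (closedBall (w t) (δ t))).toReal = |t - x| := by
    rw [Real.volume_closedBall, ENNReal.toReal_ofReal (by positivity)]
    rw [hδ]; ring_nf
  calc ‖slope G x t - f x‖
      = |t - x|⁻¹ * ‖∫ z in x..t, (f z - f x)‖ := by
        rw [e1, e2, norm_smul, Real.norm_eq_abs, abs_inv]
    _ ≤ |t - x|⁻¹ * ∫ z in Set.uIoc x t, ‖f z - f x‖ := by
        refine mul_le_mul_of_nonneg_left ?_ (by positivity)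
        exact intervalIntegral.norm_integral_le_integral_norm_uIoc
    _ ≤ |t - x|⁻¹ * ∫ z in closedBall (w t) (δ t), ‖f z - f x‖ := by
        refine mul_le_mul_of_nonneg_left ?_ (by positivity)
        exact setIntegral_mono_set hIntBall
          (Eventually.of_forall fun z => norm_nonneg _) hsubset.eventuallyLE
    _ = ⨍ y in closedBall (w t) (δ t), ‖f y - f x‖ := by
        rw [setAverage_eq, measureReal_def, hvol, smul_eq_mul]

theorem stmt6 (α : ℝ) (hα : 0 < α) (hα1 : α < 1)
    (f F : ℝ → ℝ) (hf : Integrable f (volume : Measure ℝ))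
    (hF : Integrable F (volume : Measure ℝ))
    (h : ∀ᵐ x : ℝ, F x = leftLiouvilleInt α f x) :
    ∀ᵐ x : ℝ, HasDerivAt (fun t => leftLiouvilleInt (1 - α) F t) (f x) x := by
  have hA : ∀ x : ℝ, leftLiouvilleInt (1 - α) F x = ∫ z in Iic x, f z :=
    partA hα hα1 hf hF h
  filter_upwards [partB hf] with x hx
  have heq : (fun t => leftLiouvilleInt (1 - α) F t) = fun t => ∫ z in Iic t, f z :=
    funext hA
  rw [heq]
  exact hx
end
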